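/- arXiv:2601.03576 — 5 statements merged into one kernel-verified Lean document; each statement's English description precedes it below -/
import Mathlib

section
/- Let f^{11}, f^{12}, f^{21}, f^{22} : ℝ × ℝ → ℝ be C¹ functions of (t,x) and G¹, G² : ℝ × ℝ → ℝ continuous functions such that ∂_t f^{11} + ∂_x f^{12} = G¹ and ∂_t f^{21} − ∂_x f^{22} = G² hold everywhere. Assume there is R > 0 with f^{ij}(t,x) = 0 and G^i(t,x) = 0 whenever |x| ≥ R, that a := sup_{t∈ℝ} ∫_ℝ |f^{11}(t,x)| dx, b := sup_{t∈ℝ} ∫_ℝ |f^{21}(t,x)| dx, ‖G¹‖_{L¹(ℝ×ℝ)} and ‖G²‖_{L¹(ℝ×ℝ)} are finite, and that (t,x) ↦ f^{11}(t,x) f^{22}(t,x) + f^{12}(t,x) f^{21}(t,x) is integrable on ℝ × ℝ. Then ∫_ℝ ∫_ℝ ( f^{11} f^{22} + f^{12} f^{21} ) dx dt ≤ 2 ( a + ‖G¹‖_{L¹} ) ( b + ‖G²‖_{L¹} ). -/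
open MeasureTheory Set Filter intervalIntegral
open scoped Topology

namespace DivCurl

/-- derivative in the first (time) variable as a 1D derivative -/
lemma hasDerivAt_fst {f : ℝ × ℝ → ℝ} (hf : ContDiff ℝ 1 f) (t x : ℝ) :
    HasDerivAt (fun s => f (s, x)) (fderiv ℝ f (t, x) (1, 0)) t := by
  have h := ((hf.differentiable one_ne_zero) (t, x)).hasFDerivAt
  have hc : HasDerivAt (fun s : ℝ => (s, x)) ((1 : ℝ), (0 : ℝ)) t :=
    (hasDerivAt_id t).prodMk (hasDerivAt_const t x)
  exact h.comp_hasDerivAt t hc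

/-- derivative in the second (space) variable as a 1D derivative -/
lemma hasDerivAt_snd {f : ℝ × ℝ → ℝ} (hf : ContDiff ℝ 1 f) (t x : ℝ) :
    HasDerivAt (fun y => f (t, y)) (fderiv ℝ f (t, x) (0, 1)) x := by
  have h := ((hf.differentiable one_ne_zero) (t, x)).hasFDerivAt
  have hc : HasDerivAt (fun y : ℝ => (t, y)) ((0 : ℝ), (1 : ℝ)) x :=
    (hasDerivAt_const x t).prodMk (hasDerivAt_id x)
  exact h.comp_hasDerivAt x hc

lemma continuous_Dt {f : ℝ × ℝ → ℝ} (hf : ContDiff ℝ 1 f) :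
    Continuous (fun p => fderiv ℝ f p (1, 0)) :=
  (hf.continuous_fderiv one_ne_zero).clm_apply continuous_const

lemma continuous_Dx {f : ℝ × ℝ → ℝ} (hf : ContDiff ℝ 1 f) :
    Continuous (fun p => fderiv ℝ f p (0, 1)) :=
  (hf.continuous_fderiv one_ne_zero).clm_apply continuous_const

/-- time derivative vanishes on lines where f vanishes identically -/
lemma Dt_eq_zero {f : ℝ × ℝ → ℝ} (hf : ContDiff ℝ 1 f) {x : ℝ}
    (h : ∀ t, f (t, x) = 0) (t : ℝ) : fderiv ℝ f (t, x) (1, 0) = 0 := by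
  have h1 := hasDerivAt_fst hf t x
  have h2 : HasDerivAt (fun s => f (s, x)) 0 t := by
    rw [show (fun s => f (s, x)) = fun _ => (0 : ℝ) from funext h]
    exact hasDerivAt_const _ _
  exact h1.unique h2

lemma Dx_eq_zero {f : ℝ × ℝ → ℝ} (hf : ContDiff ℝ 1 f) {t x : ℝ}
    (h : ∀ᶠ y in 𝓝 x, f (t, y) = 0) : fderiv ℝ f (t, x) (0, 1) = 0 := by
  have h1 := hasDerivAt_snd hf t x
  have h2 : HasDerivAt (fun y => f (t, y)) 0 x :=
    (hasDerivAt_const x (0 : ℝ)).congr_of_eventuallyEq h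
  exact h1.unique h2

/-- a continuous function vanishing outside a ball is integrable -/
lemma integrable_of_supp {h : ℝ → ℝ} (hc : Continuous h) {S : ℝ}
    (h0 : ∀ x, S < |x| → h x = 0) : Integrable h := by
  apply hc.integrable_of_hasCompactSupport
  apply HasCompactSupport.intro (isCompact_Icc (a := -(S + 1)) (b := S + 1))
  intro x hx
  apply h0
  simp only [Set.mem_Icc, not_and_or, not_le] at hx
  rcases hx with h | h
  · rw [lt_abs]; right; linarith
  · rw [lt_abs]; left; linarith

lemma integral_eq_intervalIntegral {h : ℝ → ℝ} (hi : Integrable h) {S : ℝ}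
    (hS : 0 ≤ S) (h0 : ∀ x, S < |x| → h x = 0) :
    ∫ x, h x = ∫ x in (-(S + 1))..(S + 1), h x := by
  rw [intervalIntegral.integral_of_le (by linarith), ← setIntegral_eq_integral_of_forall_compl_eq_zero
    (s := Set.Ioc (-(S+1)) (S+1)) (fun x hx => ?_)]
  apply h0
  simp only [Set.mem_Ioc, not_and_or, not_lt, not_le] at hx
  rcases hx with h | h
  · rw [lt_abs]; right; linarith
  · rw [lt_abs]; left; linarith



noncomputable def W (k : ℝ × ℝ → ℝ) (R : ℝ) : ℝ × ℝ → ℝ :=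
  fun p => ∫ y in (-R)..p.2, k (p.1, y)

lemma W_cont {k : ℝ × ℝ → ℝ} (hk : Continuous k) (R : ℝ) : Continuous (W k R) :=
  intervalIntegral.continuous_parametric_primitive_of_continuous
    (f := fun a y => k (a, y)) (by exact hk)

lemma W_deriv_x {k : ℝ × ℝ → ℝ} (hk : Continuous k) (R t x : ℝ) :
    HasDerivAt (fun y => W k R (t, y)) (k (t, x)) x := by
  apply intervalIntegral.integral_hasDerivAt_right
    ((hk.comp (Continuous.prodMk_right t)).intervalIntegrable _ _)
    ((hk.comp (Continuous.prodMk_right t)).stronglyMeasurableAtFilter _ _)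
    (hk.comp (Continuous.prodMk_right t)).continuousAt

lemma W_abs_le {k : ℝ × ℝ → ℝ} (hk : Continuous k) {R : ℝ}
    (hki : ∀ t : ℝ, Integrable (fun y => k (t, y))) (p : ℝ × ℝ) :
    |W k R p| ≤ ∫ y, |k (p.1, y)| := by
  have h1 := intervalIntegral.norm_integral_le_integral_norm_uIoc
    (f := fun y => k (p.1, y)) (a := -R) (b := p.2) (μ := volume)
  simp only [Real.norm_eq_abs] at h1
  refine h1.trans (setIntegral_le_integral (hki p.1).abs ?_)
  exact Eventually.of_forall fun y => abs_nonneg _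

lemma W_deriv_t {k : ℝ × ℝ → ℝ} (hk : ContDiff ℝ 1 k) (R t x : ℝ) :
    HasDerivAt (fun s => W k R (s, x)) (∫ y in (-R)..x, fderiv ℝ k (t, y) (1, 0)) t := by
  obtain ⟨C, hC⟩ := ((isCompact_Icc (a := t - 1) (b := t + 1)).prod
    (isCompact_uIcc (a := -R) (b := x))).exists_bound_of_continuousOn
    (((hk.continuous_fderiv one_ne_zero).clm_apply continuous_const).continuousOn)
  have main := intervalIntegral.hasDerivAt_integral_of_dominated_loc_of_deriv_le
    (F := fun s y => k (s, y)) (F' := fun s y => fderiv ℝ k (s, y) (1, 0))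
    (x₀ := t) (a := -R) (b := x) (bound := fun _ => C) (μ := volume) (s := Metric.ball t 1) (Metric.ball_mem_nhds t one_pos)
    (Eventually.of_forall fun s =>
      ((hk.continuous.comp (Continuous.prodMk_right s)).aestronglyMeasurable).restrict)
    ((hk.continuous.comp (Continuous.prodMk_right t)).intervalIntegrable _ _)
    ((((hk.continuous_fderiv one_ne_zero).clm_apply continuous_const).comp
        (Continuous.prodMk_right t)).aestronglyMeasurable).restrict
    (Eventually.of_forall fun y hy s hs => by
      apply hC
      constructor
      · rw [Metric.mem_ball, Real.dist_eq, abs_sub_lt_iff] at hs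
        exact ⟨by linarith [hs.1, hs.2], by linarith [hs.1, hs.2]⟩
      · exact Set.uIoc_subset_uIcc hy)
    (intervalIntegrable_const)
    (Eventually.of_forall fun y hy s hs => by
      have h := ((hk.differentiable one_ne_zero) (s, y)).hasFDerivAt
      exact h.comp_hasDerivAt s ((hasDerivAt_id s).prodMk (hasDerivAt_const s y)))
  exact main.2


end DivCurl

open MeasureTheory

/-- **Div-curl lemma** for a pair of one-dimensional conservation laws on `ℝ_t × ℝ_x`. -/
theorem div_curl_lemma
    (f11 f12 f21 f22 G1 G2 : ℝ × ℝ → ℝ)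
    (hf11 : ContDiff ℝ 1 f11) (hf12 : ContDiff ℝ 1 f12)
    (hf21 : ContDiff ℝ 1 f21) (hf22 : ContDiff ℝ 1 f22)
    (hG1 : Continuous G1) (hG2 : Continuous G2)
    (heq1 : ∀ p : ℝ × ℝ, fderiv ℝ f11 p (1, 0) + fderiv ℝ f12 p (0, 1) = G1 p)
    (heq2 : ∀ p : ℝ × ℝ, fderiv ℝ f21 p (1, 0) - fderiv ℝ f22 p (0, 1) = G2 p)
    (R : ℝ) (hR : 0 < R)
    (hsupp : ∀ p : ℝ × ℝ, R ≤ |p.2| →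
      f11 p = 0 ∧ f12 p = 0 ∧ f21 p = 0 ∧ f22 p = 0 ∧ G1 p = 0 ∧ G2 p = 0)
    (hbdd1 : BddAbove (Set.range fun t : ℝ => ∫ x : ℝ, |f11 (t, x)|))
    (hbdd2 : BddAbove (Set.range fun t : ℝ => ∫ x : ℝ, |f21 (t, x)|))
    (hG1int : Integrable G1) (hG2int : Integrable G2)
    (hint : Integrable (fun p : ℝ × ℝ => f11 p * f22 p + f12 p * f21 p)) :
    ∫ t : ℝ, ∫ x : ℝ, (f11 (t, x) * f22 (t, x) + f12 (t, x) * f21 (t, x)) ≤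
      2 * ((⨆ t : ℝ, ∫ x : ℝ, |f11 (t, x)|) + ∫ p : ℝ × ℝ, |G1 p|) *
        ((⨆ t : ℝ, ∫ x : ℝ, |f21 (t, x)|) + ∫ p : ℝ × ℝ, |G2 p|) := by
  classical
  set A := ⨆ t : ℝ, ∫ x : ℝ, |f11 (t, x)| with hA
  set B := ⨆ t : ℝ, ∫ x : ℝ, |f21 (t, x)| with hB
  set N1 := ∫ p : ℝ × ℝ, |G1 p| with hN1
  set N2 := ∫ p : ℝ × ℝ, |G2 p| with hN2
  -- basic nonnegativity
  have hA0 : 0 ≤ A := le_trans (integral_nonneg fun x => abs_nonneg _) (le_ciSup hbdd1 0)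
  have hB0 : 0 ≤ B := le_trans (integral_nonneg fun x => abs_nonneg _) (le_ciSup hbdd2 0)
  have hN10 : 0 ≤ N1 := by rw [hN1]; exact integral_nonneg fun p => abs_nonneg _
  have hN20 : 0 ≤ N2 := by rw [hN2]; exact integral_nonneg fun p => abs_nonneg _
  -- integrable sections
  have habs : ∀ (k : ℝ × ℝ → ℝ), Continuous k → (∀ p : ℝ × ℝ, R ≤ |p.2| → k p = 0) →
      ∀ t : ℝ, Integrable (fun x => k (t, x)) := fun k hc hk t =>
    DivCurl.integrable_of_supp (hc.comp (Continuous.prodMk_right t))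
      (fun x hx => hk (t, x) (le_of_lt hx))
  have hsec11 := habs f11 hf11.continuous (fun p hp => (hsupp p hp).1)
  have hsec21 := habs f21 hf21.continuous (fun p hp => (hsupp p hp).2.2.1)
  have hsecG1 := habs G1 hG1 (fun p hp => (hsupp p hp).2.2.2.2.1)
  have hsecG2 := habs G2 hG2 (fun p hp => (hsupp p hp).2.2.2.2.2)
  -- the potentials
  have hWc : Continuous (DivCurl.W f21 R) := DivCurl.W_cont hf21.continuous R
  have hgc : Continuous (DivCurl.W G2 R) := DivCurl.W_cont hG2 R
  have hWb : ∀ p : ℝ × ℝ, |DivCurl.W f21 R p| ≤ B := fun p =>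
    (DivCurl.W_abs_le hf21.continuous hsec21 p).trans (le_ciSup hbdd2 p.1)
  have hgb : ∀ p : ℝ × ℝ, |DivCurl.W G2 R p| ≤ ∫ y, |G2 (p.1, y)| :=
    DivCurl.W_abs_le hG2 hsecG2
  -- time derivative of the potential
  have hw_t : ∀ t x : ℝ, HasDerivAt (fun s => DivCurl.W f21 R (s, x))
      (f22 (t, x) + DivCurl.W G2 R (t, x)) t := by
    intro t x
    have main := DivCurl.W_deriv_t hf21 R t x
    have hval : (∫ y in (-R)..x, fderiv ℝ f21 (t, y) (1, 0))
        = f22 (t, x) + DivCurl.W G2 R (t, x) := by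
      have h1 : Set.EqOn (fun y => fderiv ℝ f21 (t, y) (1, 0))
          (fun y => fderiv ℝ f22 (t, y) (0, 1) + G2 (t, y)) (Set.uIcc (-R) x) := by
        intro y _
        have h := heq2 (t, y)
        simp only
        linarith
      have hi1 : IntervalIntegrable (fun y => fderiv ℝ f22 (t, y) (0, 1)) volume (-R) x :=
        ((DivCurl.continuous_Dx hf22).comp (Continuous.prodMk_right t)).intervalIntegrable _ _
      have hi2 : IntervalIntegrable (fun y => G2 (t, y)) volume (-R) x :=
        (hG2.comp (Continuous.prodMk_right t)).intervalIntegrable _ _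
      rw [intervalIntegral.integral_congr h1, intervalIntegral.integral_add hi1 hi2]
      have hftc : (∫ y in (-R)..x, fderiv ℝ f22 (t, y) (0, 1)) = f22 (t, x) - f22 (t, -R) :=
        intervalIntegral.integral_eq_sub_of_hasDerivAt
          (fun y _ => DivCurl.hasDerivAt_snd hf22 t y)
          hi1
      have h22 : f22 (t, -R) = 0 :=
        (hsupp (t, -R) (by simp [abs_of_pos hR])).2.2.2.1
      rw [hftc, h22, sub_zero]
      rfl
    rw [hval] at main
    exact main
  have hP2c : Continuous (fun p : ℝ × ℝ =>
      G1 p * DivCurl.W f21 R p + f11 p * DivCurl.W G2 R p) :=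
    (hG1.mul hWc).add (hf11.continuous.mul hgc)
  have hP2int : ∀ t : ℝ, Integrable (fun x =>
      G1 (t, x) * DivCurl.W f21 R (t, x) + f11 (t, x) * DivCurl.W G2 R (t, x)) := fun t =>
    DivCurl.integrable_of_supp (hP2c.comp (Continuous.prodMk_right t)) (fun x hx => by
      rw [(hsupp (t, x) hx.le).2.2.2.2.1, (hsupp (t, x) hx.le).1]; ring)
  -- the three main functions
  set ψ : ℝ → ℝ := fun t => ∫ x : ℝ, (f11 (t, x) * f22 (t, x) + f12 (t, x) * f21 (t, x)) with hψ
  set e : ℝ → ℝ := fun t =>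
    ∫ x : ℝ, (G1 (t, x) * DivCurl.W f21 R (t, x) + f11 (t, x) * DivCurl.W G2 R (t, x)) with he
  set Φ : ℝ → ℝ := fun t => ∫ x : ℝ, f11 (t, x) * DivCurl.W f21 R (t, x) with hΦ
  -- integrability of ψ
  have hψint : Integrable ψ := by
    rw [Measure.volume_eq_prod] at hint
    exact hint.integral_prod_left
  -- continuity of e
  have he_cont : Continuous e := by
    have hval : e = fun t => ∫ x in (-(R+1))..(R+1),
        (G1 (t, x) * DivCurl.W f21 R (t, x) + f11 (t, x) * DivCurl.W G2 R (t, x)) := by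
      funext t
      simp only [he]
      exact DivCurl.integral_eq_intervalIntegral (hP2int t) hR.le (fun x hx => by
        rw [(hsupp (t, x) hx.le).2.2.2.2.1, (hsupp (t, x) hx.le).1]; ring)
    rw [hval]
    exact intervalIntegral.continuous_parametric_intervalIntegral_of_continuous'
      (by exact hP2c) _ _
  -- the key derivative computation
  have hderiv : ∀ t : ℝ, HasDerivAt Φ (ψ t + e t) t := by
    intro t
    have hF'c : Continuous (fun p : ℝ × ℝ => fderiv ℝ f11 p (1, 0) * DivCurl.W f21 R p
        + f11 p * (f22 p + DivCurl.W G2 R p)) :=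
      ((DivCurl.continuous_Dt hf11).mul hWc).add
        (hf11.continuous.mul (hf22.continuous.add hgc))
    obtain ⟨C, hC⟩ := ((isCompact_Icc (a := t - 1) (b := t + 1)).prod
      (isCompact_Icc (a := -R) (b := R))).exists_bound_of_continuousOn hF'c.continuousOn
    have hbound : ∀ᵐ (x : ℝ) ∂(volume : Measure ℝ), ∀ s ∈ Metric.ball t 1,
        ‖fderiv ℝ f11 (s, x) (1, 0) * DivCurl.W f21 R (s, x)
          + f11 (s, x) * (f22 (s, x) + DivCurl.W G2 R (s, x))‖
          ≤ Set.indicator (Set.Icc (-R) R) (fun _ => C) x := by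
      refine Filter.Eventually.of_forall fun x s hs => ?_
      by_cases hx : |x| ≤ R
      · rw [Set.indicator_of_mem (by rw [Set.mem_Icc]; exact abs_le.mp hx)]
        apply hC (s, x)
        rw [Metric.mem_ball, Real.dist_eq, abs_sub_lt_iff] at hs
        rw [Set.mem_prod, Set.mem_Icc, Set.mem_Icc]
        exact ⟨⟨by linarith [hs.1, hs.2], by linarith [hs.1, hs.2]⟩, abs_le.mp hx⟩
      · push_neg at hx
        have h0 : ∀ s' : ℝ, f11 (s', x) = 0 := fun s' => (hsupp (s', x) hx.le).1
        rw [DivCurl.Dt_eq_zero hf11 h0 s, h0 s, Set.indicator_of_notMem (by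
          rw [Set.mem_Icc]
          intro hmem
          exact absurd (abs_le.mpr hmem) (not_le.mpr hx))]
        simp
    have main := hasDerivAt_integral_of_dominated_loc_of_deriv_le (μ := volume) (s := Metric.ball t 1)
      (F := fun s x => f11 (s, x) * DivCurl.W f21 R (s, x))
      (F' := fun s x => fderiv ℝ f11 (s, x) (1, 0) * DivCurl.W f21 R (s, x)
        + f11 (s, x) * (f22 (s, x) + DivCurl.W G2 R (s, x)))
      (x₀ := t) (bound := Set.indicator (Set.Icc (-R) R) fun _ => C) (Metric.ball_mem_nhds t one_pos)
      (Filter.Eventually.of_forall fun s =>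
        ((hf11.continuous.comp (Continuous.prodMk_right s)).mul
          (hWc.comp (Continuous.prodMk_right s))).aestronglyMeasurable)
      (DivCurl.integrable_of_supp ((hf11.continuous.comp (Continuous.prodMk_right t)).mul
          (hWc.comp (Continuous.prodMk_right t)))
        (fun x hx => by have h := (hsupp (t, x) hx.le).1; simp [h]))
      ((hF'c.comp (Continuous.prodMk_right t)).aestronglyMeasurable)
      hbound
      ((integrableOn_const measure_Icc_lt_top.ne).integrable_indicator
        measurableSet_Icc)
      (Filter.Eventually.of_forall fun x s _ =>
        (DivCurl.hasDerivAt_fst hf11 s x).mul (hw_t s x))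
    have hI1 : Integrable (fun x => f11 (t, x) * f22 (t, x) + f12 (t, x) * f21 (t, x)) :=
      habs _ ((hf11.continuous.mul hf22.continuous).add (hf12.continuous.mul hf21.continuous))
        (fun p hp => by show f11 p * f22 p + f12 p * f21 p = 0; rw [(hsupp p hp).1, (hsupp p hp).2.1]; ring) t
    have hI3c : Continuous (fun x => fderiv ℝ f12 (t, x) (0, 1) * DivCurl.W f21 R (t, x)
        + f12 (t, x) * f21 (t, x)) :=
      (((DivCurl.continuous_Dx hf12).comp (Continuous.prodMk_right t)).mul
        (hWc.comp (Continuous.prodMk_right t))).add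
        ((hf12.continuous.comp (Continuous.prodMk_right t)).mul
          (hf21.continuous.comp (Continuous.prodMk_right t)))
    have hI3z : ∀ x : ℝ, R < |x| → fderiv ℝ f12 (t, x) (0, 1) * DivCurl.W f21 R (t, x)
        + f12 (t, x) * f21 (t, x) = 0 := by
      intro x hx
      have hev : ∀ᶠ y in nhds x, f12 (t, y) = 0 := by
        filter_upwards [(isOpen_lt continuous_const continuous_abs).mem_nhds
          (show x ∈ {y : ℝ | R < |y|} from hx)] with y hy
        exact (hsupp (t, y) (le_of_lt hy)).2.1
      rw [DivCurl.Dx_eq_zero hf12 hev, (hsupp (t, x) hx.le).2.1]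
      ring
    have hI3 : Integrable (fun x => fderiv ℝ f12 (t, x) (0, 1) * DivCurl.W f21 R (t, x)
        + f12 (t, x) * f21 (t, x)) := DivCurl.integrable_of_supp hI3c hI3z
    have hI3zero : (∫ x : ℝ, (fderiv ℝ f12 (t, x) (0, 1) * DivCurl.W f21 R (t, x)
        + f12 (t, x) * f21 (t, x))) = 0 := by
      rw [DivCurl.integral_eq_intervalIntegral hI3 hR.le hI3z]
      rw [intervalIntegral.integral_eq_sub_of_hasDerivAt
        (f := fun x => f12 (t, x) * DivCurl.W f21 R (t, x))
        (fun y _ => (DivCurl.hasDerivAt_snd hf12 t y).mul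
          (DivCurl.W_deriv_x hf21.continuous R t y))
        hI3.intervalIntegrable]
      have z1 : f12 (t, R + 1) = 0 := (hsupp (t, R + 1) (by
        show R ≤ |R + 1|
        rw [abs_of_pos (by linarith : (0:ℝ) < R + 1)]
        linarith)).2.1
      have z2 : f12 (t, -(R + 1)) = 0 := (hsupp (t, -(R + 1)) (by
        show R ≤ |-(R + 1)|
        rw [abs_neg, abs_of_pos (by linarith : (0:ℝ) < R + 1)]
        linarith)).2.1
      rw [z1, z2]
      ring
    have hsplitfun : (fun x => fderiv ℝ f11 (t, x) (1, 0) * DivCurl.W f21 R (t, x)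
        + f11 (t, x) * (f22 (t, x) + DivCurl.W G2 R (t, x)))
        = fun x => ((f11 (t, x) * f22 (t, x) + f12 (t, x) * f21 (t, x))
          + (G1 (t, x) * DivCurl.W f21 R (t, x) + f11 (t, x) * DivCurl.W G2 R (t, x)))
          - (fderiv ℝ f12 (t, x) (0, 1) * DivCurl.W f21 R (t, x)
            + f12 (t, x) * f21 (t, x)) := by
      funext x
      have h := heq1 (t, x)
      linear_combination DivCurl.W f21 R (t, x) * h
    have hval : (∫ x : ℝ, (fderiv ℝ f11 (t, x) (1, 0) * DivCurl.W f21 R (t, x)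
        + f11 (t, x) * (f22 (t, x) + DivCurl.W G2 R (t, x)))) = ψ t + e t := by
      have hsub : (∫ x : ℝ, (((f11 (t, x) * f22 (t, x) + f12 (t, x) * f21 (t, x)) + (G1 (t, x) * DivCurl.W f21 R (t, x) + f11 (t, x) * DivCurl.W G2 R (t, x))) - (fderiv ℝ f12 (t, x) (0, 1) * DivCurl.W f21 R (t, x) + f12 (t, x) * f21 (t, x))))
          = (∫ x : ℝ, ((f11 (t, x) * f22 (t, x) + f12 (t, x) * f21 (t, x)) + (G1 (t, x) * DivCurl.W f21 R (t, x) + f11 (t, x) * DivCurl.W G2 R (t, x)))) - ∫ x : ℝ, (fderiv ℝ f12 (t, x) (0, 1) * DivCurl.W f21 R (t, x) + f12 (t, x) * f21 (t, x)) :=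
        integral_sub (hI1.add (hP2int t)) hI3
      have hadd : (∫ x : ℝ, ((f11 (t, x) * f22 (t, x) + f12 (t, x) * f21 (t, x)) + (G1 (t, x) * DivCurl.W f21 R (t, x) + f11 (t, x) * DivCurl.W G2 R (t, x))))
          = (∫ x : ℝ, (f11 (t, x) * f22 (t, x) + f12 (t, x) * f21 (t, x))) + ∫ x : ℝ, (G1 (t, x) * DivCurl.W f21 R (t, x) + f11 (t, x) * DivCurl.W G2 R (t, x)) :=
        integral_add hI1 (hP2int t)
      rw [hsplitfun, hsub, hadd, hI3zero, sub_zero]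
    have main2 := main.2
    rw [hval] at main2
    exact main2
  -- bound on Φ
  have hΦb : ∀ t : ℝ, |Φ t| ≤ A * B := by
    intro t
    have hWint : Integrable (fun x => f11 (t, x) * DivCurl.W f21 R (t, x)) :=
      DivCurl.integrable_of_supp ((hf11.continuous.comp (Continuous.prodMk_right t)).mul
        (hWc.comp (Continuous.prodMk_right t)))
        (fun x hx => by rw [(hsupp (t, x) hx.le).1]; ring)
    have h1 : |Φ t| ≤ ∫ x : ℝ, |f11 (t, x) * DivCurl.W f21 R (t, x)| := by
      simp only [hΦ]
      simpa only [Real.norm_eq_abs] using norm_integral_le_integral_norm (μ := volume)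
        (fun x => f11 (t, x) * DivCurl.W f21 R (t, x))
    have h2 : (∫ x : ℝ, |f11 (t, x) * DivCurl.W f21 R (t, x)|) ≤ ∫ x : ℝ, |f11 (t, x)| * B :=
      integral_mono hWint.abs ((hsec11 t).abs.mul_const B) (fun x => by
        rw [abs_mul]
        exact mul_le_mul_of_nonneg_left (hWb (t, x)) (abs_nonneg _))
    rw [MeasureTheory.integral_mul_const] at h2
    have h3 : (∫ x : ℝ, |f11 (t, x)|) ≤ A := le_ciSup hbdd1 t
    have h4 := mul_le_mul_of_nonneg_right h3 hB0
    linarith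
  -- the error size function
  set m : ℝ → ℝ := fun t => (∫ x : ℝ, |G1 (t, x)|) * B + A * (∫ x : ℝ, |G2 (t, x)|) with hm
  have hG1F : Integrable (fun t : ℝ => ∫ x : ℝ, |G1 (t, x)|) := by
    have h := hG1int.abs
    rw [Measure.volume_eq_prod] at h
    exact h.integral_prod_left
  have hG2F : Integrable (fun t : ℝ => ∫ x : ℝ, |G2 (t, x)|) := by
    have h := hG2int.abs
    rw [Measure.volume_eq_prod] at h
    exact h.integral_prod_left
  have hm_int : Integrable m := (hG1F.mul_const B).add (hG2F.const_mul A)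
  have hm_nonneg : ∀ t : ℝ, 0 ≤ m t := fun t =>
    add_nonneg (mul_nonneg (integral_nonneg fun x => abs_nonneg _) hB0)
      (mul_nonneg hA0 (integral_nonneg fun x => abs_nonneg _))
  have hm_val : ∫ t : ℝ, m t = N1 * B + A * N2 := by
    have h1 : N1 = ∫ t : ℝ, ∫ x : ℝ, |G1 (t, x)| := by
      have h := hG1int.abs
      rw [Measure.volume_eq_prod] at h
      rw [hN1, Measure.volume_eq_prod]
      exact integral_prod _ h
    have h2 : N2 = ∫ t : ℝ, ∫ x : ℝ, |G2 (t, x)| := by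
      have h := hG2int.abs
      rw [Measure.volume_eq_prod] at h
      rw [hN2, Measure.volume_eq_prod]
      exact integral_prod _ h
    simp only [hm]
    rw [integral_add (hG1F.mul_const B) (hG2F.const_mul A), MeasureTheory.integral_mul_const,
      MeasureTheory.integral_const_mul, h1, h2]
  have he_b : ∀ t : ℝ, |e t| ≤ m t := by
    intro t
    have hc2 : 0 ≤ ∫ y : ℝ, |G2 (t, y)| := integral_nonneg fun y => abs_nonneg _
    have h1 : |e t| ≤ ∫ x : ℝ,
        |G1 (t, x) * DivCurl.W f21 R (t, x) + f11 (t, x) * DivCurl.W G2 R (t, x)| := by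
      simp only [he]
      simpa only [Real.norm_eq_abs] using norm_integral_le_integral_norm (μ := volume)
        (fun x => G1 (t, x) * DivCurl.W f21 R (t, x) + f11 (t, x) * DivCurl.W G2 R (t, x))
    have h2 : (∫ x : ℝ,
        |G1 (t, x) * DivCurl.W f21 R (t, x) + f11 (t, x) * DivCurl.W G2 R (t, x)|)
        ≤ ∫ x : ℝ, (|G1 (t, x)| * B + |f11 (t, x)| * (∫ y : ℝ, |G2 (t, y)|)) := by
      apply integral_mono (hP2int t).abs
        (((hsecG1 t).abs.mul_const B).add ((hsec11 t).abs.mul_const _))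
      intro x
      calc |G1 (t, x) * DivCurl.W f21 R (t, x) + f11 (t, x) * DivCurl.W G2 R (t, x)|
          ≤ |G1 (t, x)| * |DivCurl.W f21 R (t, x)|
            + |f11 (t, x)| * |DivCurl.W G2 R (t, x)| := by
            rw [← abs_mul, ← abs_mul]; exact abs_add_le _ _
        _ ≤ |G1 (t, x)| * B + |f11 (t, x)| * (∫ y : ℝ, |G2 (t, y)|) :=
            add_le_add (mul_le_mul_of_nonneg_left (hWb (t, x)) (abs_nonneg _))
              (mul_le_mul_of_nonneg_left (hgb (t, x)) (abs_nonneg _))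
    rw [integral_add ((hsecG1 t).abs.mul_const B) ((hsec11 t).abs.mul_const _),
      MeasureTheory.integral_mul_const, MeasureTheory.integral_mul_const] at h2
    have h3 : (∫ x : ℝ, |f11 (t, x)|) ≤ A := le_ciSup hbdd1 t
    have h4 := mul_le_mul_of_nonneg_right h3 hc2
    simp only [hm]
    linarith
  -- main estimate on finite intervals
  have key : ∀ T : ℝ, 0 ≤ T → (∫ t in (-T)..T, ψ t) ≤ 2 * (A * B) + (N1 * B + A * N2) := by
    intro T hT
    have hftc : (∫ t in (-T)..T, (ψ t + e t)) = Φ T - Φ (-T) :=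
      intervalIntegral.integral_eq_sub_of_hasDerivAt (fun t _ => hderiv t)
        (hψint.intervalIntegrable.add (he_cont.intervalIntegrable _ _))
    have hsplit : (∫ t in (-T)..T, (ψ t + e t)) =
        (∫ t in (-T)..T, ψ t) + ∫ t in (-T)..T, e t :=
      intervalIntegral.integral_add hψint.intervalIntegrable
        (he_cont.intervalIntegrable _ _)
    have hebound : |∫ t in (-T)..T, e t| ≤ ∫ t : ℝ, m t := by
      have h1 := intervalIntegral.norm_integral_le_integral_norm_uIoc
        (f := e) (a := -T) (b := T) (μ := volume)
      simp only [Real.norm_eq_abs] at h1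
      have hia := (he_cont.abs.intervalIntegrable (μ := volume) (-T) T)
      rw [intervalIntegrable_iff] at hia
      have h2 : (∫ t in Set.uIoc (-T) T, |e t|) ≤ ∫ t in Set.uIoc (-T) T, m t :=
        setIntegral_mono_on hia (hm_int.integrableOn) measurableSet_uIoc
          (fun t _ => he_b t)
      have h3 : (∫ t in Set.uIoc (-T) T, m t) ≤ ∫ t : ℝ, m t :=
        setIntegral_le_integral hm_int (Eventually.of_forall hm_nonneg)
      linarith
    rw [hm_val] at hebound
    have hb1 := abs_le.mp (hΦb T)
    have hb2 := abs_le.mp (hΦb (-T))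
    have habs' := abs_le.mp hebound
    linarith [hftc, hsplit, hb1.2, hb2.1, habs'.1]
  -- pass to the limit
  have hlim : Tendsto (fun T : ℝ => ∫ t in (-T)..T, ψ t) atTop (𝓝 (∫ t : ℝ, ψ t)) :=
    intervalIntegral_tendsto_integral hψint tendsto_neg_atTop_atBot tendsto_id
  have hle : (∫ t : ℝ, ψ t) ≤ 2 * (A * B) + (N1 * B + A * N2) :=
    le_of_tendsto hlim (Filter.eventually_atTop.2 ⟨0, fun T hT => key T hT⟩)
  calc (∫ t : ℝ, ψ t) ≤ 2 * (A * B) + (N1 * B + A * N2) := hle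
    _ ≤ 2 * (A + N1) * (B + N2) := by
        nlinarith [mul_nonneg hA0 hN20, mul_nonneg hN10 hB0, mul_nonneg hN10 hN20]
end

section
/- Let f^{11}, f^{12}, f^{21}, f^{22} : ℝ × ℝ → ℝ be C¹ functions of (t,x) and G¹, G² : ℝ × ℝ → ℝ continuous functions such that ∂_t f^{11} + ∂_x f^{12} = G¹ and ∂_t f^{21} − ∂_x f^{22} = G² hold everywhere, and assume there is R > 0 with f^{ij}(t,x) = 0 and G^i(t,x) = 0 whenever |x| ≥ R. Define F(t) := ∬_{{(x,y) : x < y}} f^{11}(t,x) f^{21}(t,y) dx dy. Then F is differentiable and for every t ∈ ℝ one has F'(t) + ∫_ℝ ( f^{11}(t,x) f^{22}(t,x) + f^{12}(t,x) f^{21}(t,x) ) dx = ∫_ℝ ( ∫_{−∞}^{x} f^{11}(t,z) dz ) G²(t,x) dx + ∫_ℝ ( ∫_{x}^{+∞} f^{21}(t,z) dz ) G¹(t,x) dx. -/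
open MeasureTheory

section DivCurlHelpers

variable {f : ℝ × ℝ → ℝ}

lemma DCL.tline (hf : ContDiff ℝ 1 f) (τ x : ℝ) :
    HasDerivAt (fun s => f (s, x)) (fderiv ℝ f (τ, x) (1, 0)) τ := by
  have h1 : HasDerivAt (fun s : ℝ => (s, x)) ((1 : ℝ), (0 : ℝ)) τ :=
    (hasDerivAt_id τ).prodMk (hasDerivAt_const τ x)
  exact (hf.differentiable one_ne_zero (τ, x)).hasFDerivAt.comp_hasDerivAt τ h1

lemma DCL.xline (hf : ContDiff ℝ 1 f) (t y : ℝ) :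
    HasDerivAt (fun s => f (t, s)) (fderiv ℝ f (t, y) (0, 1)) y := by
  have h1 : HasDerivAt (fun s : ℝ => (t, s)) ((0 : ℝ), (1 : ℝ)) y :=
    (hasDerivAt_const y t).prodMk (hasDerivAt_id y)
  exact (hf.differentiable one_ne_zero (t, y)).hasFDerivAt.comp_hasDerivAt y h1

lemma DCL.tderiv_zero (hf : ContDiff ℝ 1 f) {R : ℝ}
    (h0 : ∀ p : ℝ × ℝ, R ≤ |p.2| → f p = 0) {x : ℝ} (hx : R ≤ |x|) (τ : ℝ) :
    fderiv ℝ f (τ, x) (1, 0) = 0 := by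
  have h1 := DCL.tline hf τ x
  have h2 : (fun s => f (s, x)) = fun _ => (0 : ℝ) := funext fun s => h0 (s, x) hx
  rw [h2] at h1
  exact h1.unique (hasDerivAt_const τ 0)

lemma DCL.xderiv_zero {R : ℝ}
    (h0 : ∀ p : ℝ × ℝ, R ≤ |p.2| → f p = 0) {x : ℝ} (hx : R < |x|) (t : ℝ) :
    fderiv ℝ f (t, x) (0, 1) = 0 := by
  have hev : f =ᶠ[nhds (t, x)] fun _ => (0 : ℝ) := by
    have hopen : IsOpen {p : ℝ × ℝ | R < |p.2|} :=
      isOpen_lt continuous_const (continuous_abs.comp continuous_snd)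
    filter_upwards [hopen.mem_nhds hx] with p hp
    exact h0 p hp.le
  rw [hev.fderiv_eq, fderiv_fun_const]
  rfl

lemma DCL.cont_tderiv (hf : ContDiff ℝ 1 f) :
    Continuous (fun p : ℝ × ℝ => fderiv ℝ f p (1, 0)) :=
  (hf.continuous_fderiv one_ne_zero).clm_apply continuous_const

lemma DCL.cont_xderiv (hf : ContDiff ℝ 1 f) :
    Continuous (fun p : ℝ × ℝ => fderiv ℝ f p (0, 1)) :=
  (hf.continuous_fderiv one_ne_zero).clm_apply continuous_const

lemma DCL.abs_lt_of_not_mem_Icc {x R : ℝ} (h : x ∉ Set.Icc (-R) R) : R < |x| := by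
  rcases not_and_or.1 (fun hc => h ⟨hc.1, hc.2⟩) with h1 | h1
  · linarith [lt_of_not_ge h1, neg_abs_le x]
  · linarith [lt_of_not_ge h1, le_abs_self x]

lemma DCL.hcs_of_vanish {g : ℝ → ℝ} {R : ℝ} (h : ∀ x, R ≤ |x| → g x = 0) :
    HasCompactSupport g := by
  apply HasCompactSupport.intro (isCompact_Icc (a := -R) (b := R))
  exact fun x hx => h x (DCL.abs_lt_of_not_mem_Icc hx).le

lemma DCL.int_of_vanish {g : ℝ → ℝ} {R : ℝ} (hc : Continuous g)
    (h : ∀ x, R ≤ |x| → g x = 0) : Integrable g :=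
  hc.integrable_of_hasCompactSupport (DCL.hcs_of_vanish h)

lemma DCL.Ioi_eq_intervalIntegral {g : ℝ → ℝ} {R : ℝ} (hc : Continuous g)
    (h : ∀ z, R ≤ |z| → g z = 0) (x : ℝ) :
    ∫ z in Set.Ioi x, g z = ∫ z in x..(R + 1), g z := by
  have hint := DCL.int_of_vanish hc h
  rcases le_or_gt x (R + 1) with hx | hx
  · rw [intervalIntegral.integral_of_le hx]
    have hsplit : Set.Ioi x = Set.Ioc x (R + 1) ∪ Set.Ioi (R + 1) := by
      rw [Set.Ioc_union_Ioi_eq_Ioi hx]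
    rw [hsplit, setIntegral_union (Set.Ioc_disjoint_Ioi le_rfl) measurableSet_Ioi
      hint.integrableOn hint.integrableOn]
    have h2 : ∫ z in Set.Ioi (R + 1), g z = 0 := by
      apply setIntegral_eq_zero_of_forall_eq_zero
      intro z hz
      exact h z (le_trans (by linarith [Set.mem_Ioi.1 hz]) (le_abs_self z))
    rw [h2, add_zero]
  · rw [intervalIntegral.integral_of_ge hx.le]
    have h1 : ∫ z in Set.Ioi x, g z = 0 := by
      apply setIntegral_eq_zero_of_forall_eq_zero
      intro z hz
      exact h z (le_trans (by linarith [Set.mem_Ioi.1 hz]) (le_abs_self z))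
    have h2 : ∫ z in Set.Ioc (R + 1) x, g z = 0 := by
      apply setIntegral_eq_zero_of_forall_eq_zero
      intro z hz
      exact h z (le_trans (by linarith [hz.1]) (le_abs_self z))
    rw [h1, h2, neg_zero]

lemma DCL.Iio_eq_intervalIntegral {g : ℝ → ℝ} {R : ℝ} (hc : Continuous g)
    (h : ∀ z, R ≤ |z| → g z = 0) (y : ℝ) :
    ∫ z in Set.Iio y, g z = ∫ z in (-(R + 1))..y, g z := by
  have hint := DCL.int_of_vanish hc h
  rcases le_or_gt (-(R + 1)) y with hy | hy
  · rw [intervalIntegral.integral_of_le hy]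
    have hIic : ∫ z in Set.Iio y, g z = ∫ z in Set.Iic y, g z :=
      setIntegral_congr_set Iio_ae_eq_Iic
    have hsplit : Set.Iic y = Set.Iic (-(R + 1)) ∪ Set.Ioc (-(R + 1)) y := by
      rw [Set.Iic_union_Ioc_eq_Iic hy]
    rw [hIic, hsplit, setIntegral_union (Set.Iic_disjoint_Ioc le_rfl) measurableSet_Ioc
      hint.integrableOn hint.integrableOn]
    have h2 : ∫ z in Set.Iic (-(R + 1)), g z = 0 := by
      apply setIntegral_eq_zero_of_forall_eq_zero
      intro z hz
      have hz' : z ≤ -(R + 1) := hz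
      exact h z (le_trans (by linarith) (neg_le_abs z))
    rw [h2, zero_add]
  · rw [intervalIntegral.integral_of_ge hy.le]
    have h1 : ∫ z in Set.Iio y, g z = 0 := by
      apply setIntegral_eq_zero_of_forall_eq_zero
      intro z hz
      have hz' : z < y := hz
      exact h z (le_trans (by linarith) (neg_le_abs z))
    have h2 : ∫ z in Set.Ioc y (-(R + 1)), g z = 0 := by
      apply setIntegral_eq_zero_of_forall_eq_zero
      intro z hz
      exact h z (le_trans (by linarith [hz.2]) (neg_le_abs z))
    rw [h1, h2, neg_zero]

lemma DCL.hasDerivAt_Ioi {g : ℝ → ℝ} {R : ℝ} (hc : Continuous g)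
    (h : ∀ z, R ≤ |z| → g z = 0) (x : ℝ) :
    HasDerivAt (fun u => ∫ z in Set.Ioi u, g z) (-(g x)) x := by
  have key : ∀ u, ∫ z in Set.Ioi u, g z = ∫ z in u..(R + 1), g z :=
    DCL.Ioi_eq_intervalIntegral hc h
  rw [funext key]
  exact intervalIntegral.integral_hasDerivAt_left
    ((DCL.int_of_vanish hc h).intervalIntegrable)
    (hc.stronglyMeasurableAtFilter _ _) hc.continuousAt

lemma DCL.hasDerivAt_Iio {g : ℝ → ℝ} {R : ℝ} (hc : Continuous g)
    (h : ∀ z, R ≤ |z| → g z = 0) (y : ℝ) :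
    HasDerivAt (fun u => ∫ z in Set.Iio u, g z) (g y) y := by
  have key : ∀ u, ∫ z in Set.Iio u, g z = ∫ z in (-(R + 1))..u, g z :=
    DCL.Iio_eq_intervalIntegral hc h
  rw [funext key]
  exact intervalIntegral.integral_hasDerivAt_right
    ((DCL.int_of_vanish hc h).intervalIntegrable)
    (hc.stronglyMeasurableAtFilter _ _) hc.continuousAt

lemma DCL.hSmeas : MeasurableSet {q : ℝ × ℝ | q.1 < q.2} :=
  measurableSet_lt measurable_fst measurable_snd

lemma DCL.prod_vanish_integrable {φ ψ : ℝ → ℝ} {R : ℝ}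
    (hφ : Continuous φ) (hψ : Continuous ψ)
    (hφ0 : ∀ x, R ≤ |x| → φ x = 0) (hψ0 : ∀ x, R ≤ |x| → ψ x = 0) :
    Integrable (fun q : ℝ × ℝ => φ q.1 * ψ q.2) := by
  apply Continuous.integrable_of_hasCompactSupport
    ((hφ.comp continuous_fst).mul (hψ.comp continuous_snd))
  apply HasCompactSupport.intro (K := Set.Icc (-R) R ×ˢ Set.Icc (-R) R)
    ((isCompact_Icc).prod isCompact_Icc)
  intro q hq
  rcases not_and_or.1 (fun hc => hq ⟨hc.1, hc.2⟩) with h1 | h1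
  · have : φ q.1 = 0 := hφ0 _ (DCL.abs_lt_of_not_mem_Icc h1).le
    simp [this]
  · have : ψ q.2 = 0 := hψ0 _ (DCL.abs_lt_of_not_mem_Icc h1).le
    simp [this]

lemma DCL.fubini_A {φ ψ : ℝ → ℝ} {R : ℝ}
    (hφ : Continuous φ) (hψ : Continuous ψ)
    (hφ0 : ∀ x, R ≤ |x| → φ x = 0) (hψ0 : ∀ x, R ≤ |x| → ψ x = 0) :
    ∫ q in {q : ℝ × ℝ | q.1 < q.2}, φ q.1 * ψ q.2
      = ∫ x : ℝ, φ x * ∫ z in Set.Ioi x, ψ z := by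
  have hint := DCL.prod_vanish_integrable hφ hψ hφ0 hψ0
  rw [← integral_indicator DCL.hSmeas]
  have hind : Integrable ({q : ℝ × ℝ | q.1 < q.2}.indicator fun q => φ q.1 * ψ q.2) :=
    hint.indicator DCL.hSmeas
  rw [Measure.volume_eq_prod] at hind ⊢
  rw [MeasureTheory.integral_prod _ hind]
  congr 1
  funext x
  have key : ∀ y : ℝ, ({q : ℝ × ℝ | q.1 < q.2}.indicator fun q => φ q.1 * ψ q.2) (x, y)
      = (Set.Ioi x).indicator (fun y => φ x * ψ y) y := by
    intro y
    by_cases h : x < y <;> simp [Set.indicator_apply, h]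
  rw [funext key, integral_indicator measurableSet_Ioi, integral_const_mul]

lemma DCL.fubini_B {φ ψ : ℝ → ℝ} {R : ℝ}
    (hφ : Continuous φ) (hψ : Continuous ψ)
    (hφ0 : ∀ x, R ≤ |x| → φ x = 0) (hψ0 : ∀ x, R ≤ |x| → ψ x = 0) :
    ∫ q in {q : ℝ × ℝ | q.1 < q.2}, φ q.1 * ψ q.2
      = ∫ y : ℝ, (∫ z in Set.Iio y, φ z) * ψ y := by
  have hint := DCL.prod_vanish_integrable hφ hψ hφ0 hψ0
  rw [← integral_indicator DCL.hSmeas]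
  have hind : Integrable ({q : ℝ × ℝ | q.1 < q.2}.indicator fun q => φ q.1 * ψ q.2) :=
    hint.indicator DCL.hSmeas
  rw [Measure.volume_eq_prod] at hind ⊢
  rw [MeasureTheory.integral_prod_symm _ hind]
  congr 1
  funext y
  have key : ∀ x : ℝ, ({q : ℝ × ℝ | q.1 < q.2}.indicator fun q => φ q.1 * ψ q.2) (x, y)
      = (Set.Iio y).indicator (fun x => φ x * ψ y) x := by
    intro x
    by_cases h : x < y <;> simp [Set.indicator_apply, h]
  rw [funext key, integral_indicator measurableSet_Iio, integral_mul_const]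

lemma DCL.integral_deriv_zero {u u' : ℝ → ℝ} {M : ℝ} (hM : 0 < M)
    (hu : ∀ x, HasDerivAt u (u' x) x) (hc : Continuous u')
    (h0 : ∀ x, M ≤ |x| → u x = 0) (h0' : ∀ x, M ≤ |x| → u' x = 0) :
    ∫ x, u' x = 0 := by
  have h1 : ∫ x in Set.Icc (-M) M, u' x = ∫ x, u' x :=
    setIntegral_eq_integral_of_forall_compl_eq_zero
      (fun x hx => h0' x (DCL.abs_lt_of_not_mem_Icc hx).le)
  rw [← h1]
  have h2 : ∫ x in Set.Icc (-M) M, u' x = ∫ x in Set.Ioc (-M) M, u' x :=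
    (setIntegral_congr_set Ioc_ae_eq_Icc).symm
  rw [h2, ← intervalIntegral.integral_of_le (by linarith)]
  rw [intervalIntegral.integral_eq_sub_of_hasDerivAt (fun x _ => hu x)
    (hc.intervalIntegrable _ _)]
  rw [h0 M (by rw [abs_of_nonneg hM.le]), h0 (-M) (by rw [abs_neg, abs_of_nonneg hM.le]),
    sub_zero]

end DivCurlHelpers

/-- The key differential identity behind the div-curl lemma: with
`F(t) = ∬_{x < y} f¹¹(t,x) f²¹(t,y) dx dy`, one has
`F'(t) + ∫ (f¹¹f²² + f¹²f²¹) dx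
  = ∫ (∫_{-∞}^x f¹¹) G² dx + ∫ (∫_x^∞ f²¹) G¹ dx`. -/
theorem div_curl_key_identity
    (f11 f12 f21 f22 G1 G2 : ℝ × ℝ → ℝ)
    (hf11 : ContDiff ℝ 1 f11) (hf12 : ContDiff ℝ 1 f12)
    (hf21 : ContDiff ℝ 1 f21) (hf22 : ContDiff ℝ 1 f22)
    (hG1 : Continuous G1) (hG2 : Continuous G2)
    (heq1 : ∀ p : ℝ × ℝ, fderiv ℝ f11 p (1, 0) + fderiv ℝ f12 p (0, 1) = G1 p)
    (heq2 : ∀ p : ℝ × ℝ, fderiv ℝ f21 p (1, 0) - fderiv ℝ f22 p (0, 1) = G2 p)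
    (R : ℝ) (hR : 0 < R)
    (hsupp : ∀ p : ℝ × ℝ, R ≤ |p.2| →
      f11 p = 0 ∧ f12 p = 0 ∧ f21 p = 0 ∧ f22 p = 0 ∧ G1 p = 0 ∧ G2 p = 0) :
    ∀ t : ℝ,
      HasDerivAt
        (fun τ : ℝ =>
          ∫ q in {q : ℝ × ℝ | q.1 < q.2}, f11 (τ, q.1) * f21 (τ, q.2))
        ((∫ x : ℝ, (∫ z in Set.Iio x, f11 (t, z)) * G2 (t, x)) +
          (∫ x : ℝ, (∫ z in Set.Ioi x, f21 (t, z)) * G1 (t, x)) -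
          ∫ x : ℝ, (f11 (t, x) * f22 (t, x) + f12 (t, x) * f21 (t, x))) t := by
  intro t
  -- vanishing facts
  have hv11 : ∀ τ x, R ≤ |x| → f11 (τ, x) = 0 := fun τ x hx => (hsupp (τ, x) hx).1
  have hv12 : ∀ τ x, R ≤ |x| → f12 (τ, x) = 0 := fun τ x hx => (hsupp (τ, x) hx).2.1
  have hv21 : ∀ τ x, R ≤ |x| → f21 (τ, x) = 0 := fun τ x hx => (hsupp (τ, x) hx).2.2.1
  have hv22 : ∀ τ x, R ≤ |x| → f22 (τ, x) = 0 := fun τ x hx => (hsupp (τ, x) hx).2.2.2.1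
  have hs11 : ∀ p : ℝ × ℝ, R ≤ |p.2| → f11 p = 0 := fun p hp => (hsupp p hp).1
  have hs12 : ∀ p : ℝ × ℝ, R ≤ |p.2| → f12 p = 0 := fun p hp => (hsupp p hp).2.1
  have hs21 : ∀ p : ℝ × ℝ, R ≤ |p.2| → f21 p = 0 := fun p hp => (hsupp p hp).2.2.1
  have hs22 : ∀ p : ℝ × ℝ, R ≤ |p.2| → f22 p = 0 := fun p hp => (hsupp p hp).2.2.2.1
  -- continuity of slices at time t
  have hmk : Continuous (fun x : ℝ => ((t, x) : ℝ × ℝ)) :=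
    continuous_const.prodMk continuous_id
  have c11 : Continuous (fun x => f11 (t, x)) := hf11.continuous.comp hmk
  have c12 : Continuous (fun x => f12 (t, x)) := hf12.continuous.comp hmk
  have c21 : Continuous (fun x => f21 (t, x)) := hf21.continuous.comp hmk
  have c22 : Continuous (fun x => f22 (t, x)) := hf22.continuous.comp hmk
  have cG1 : Continuous (fun x => G1 (t, x)) := hG1.comp hmk
  have cG2 : Continuous (fun x => G2 (t, x)) := hG2.comp hmk
  have ca : Continuous (fun x => fderiv ℝ f11 (t, x) (1, 0)) :=
    (DCL.cont_tderiv hf11).comp hmk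
  have cb : Continuous (fun x => fderiv ℝ f21 (t, x) (1, 0)) :=
    (DCL.cont_tderiv hf21).comp hmk
  have cc : Continuous (fun x => fderiv ℝ f12 (t, x) (0, 1)) :=
    (DCL.cont_xderiv hf12).comp hmk
  have cd : Continuous (fun x => fderiv ℝ f22 (t, x) (0, 1)) :=
    (DCL.cont_xderiv hf22).comp hmk
  -- vanishing of t-derivatives
  have va : ∀ τ x, R ≤ |x| → fderiv ℝ f11 (τ, x) (1, 0) = 0 :=
    fun τ x hx => DCL.tderiv_zero hf11 hs11 hx τ
  have vb : ∀ τ x, R ≤ |x| → fderiv ℝ f21 (τ, x) (1, 0) = 0 :=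
    fun τ x hx => DCL.tderiv_zero hf21 hs21 hx τ
  -- H and K
  set H : ℝ → ℝ := fun x => ∫ z in Set.Ioi x, f21 (t, z) with hHdef
  set K : ℝ → ℝ := fun y => ∫ z in Set.Iio y, f11 (t, z) with hKdef
  have hH : ∀ x, HasDerivAt H (-(f21 (t, x))) x :=
    fun x => DCL.hasDerivAt_Ioi c21 (hv21 t) x
  have hK : ∀ y, HasDerivAt K (f11 (t, y)) y :=
    fun y => DCL.hasDerivAt_Iio c11 (hv11 t) y
  have cH : Continuous H := continuous_iff_continuousAt.2 fun x => (hH x).continuousAt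
  have cK : Continuous K := continuous_iff_continuousAt.2 fun y => (hK y).continuousAt
  -- Step 1: differentiation under the integral sign
  set S : Set (ℝ × ℝ) := {q : ℝ × ℝ | q.1 < q.2} with hSdef
  set F' : ℝ → ℝ × ℝ → ℝ := fun τ q =>
    fderiv ℝ f11 (τ, q.1) (1, 0) * f21 (τ, q.2)
      + f11 (τ, q.1) * fderiv ℝ f21 (τ, q.2) (1, 0) with hF'def
  -- the uniform bound
  have hΦcont : Continuous (fun p : ℝ × (ℝ × ℝ) => F' p.1 p.2) := by
    have e1 : Continuous (fun p : ℝ × (ℝ × ℝ) => ((p.1, p.2.1) : ℝ × ℝ)) :=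
      continuous_fst.prodMk (continuous_fst.comp continuous_snd)
    have e2 : Continuous (fun p : ℝ × (ℝ × ℝ) => ((p.1, p.2.2) : ℝ × ℝ)) :=
      continuous_fst.prodMk (continuous_snd.comp continuous_snd)
    exact (((DCL.cont_tderiv hf11).comp e1).mul (hf21.continuous.comp e2)).add
      ((hf11.continuous.comp e1).mul ((DCL.cont_tderiv hf21).comp e2))
  obtain ⟨C, hC⟩ :=
    (((isCompact_Icc (a := t - 1) (b := t + 1)).prod
      ((isCompact_Icc (a := -R) (b := R)).prod isCompact_Icc))).exists_bound_of_continuousOn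
      hΦcont.continuousOn
  set s2 : Set (ℝ × ℝ) := Set.Icc (-R) R ×ˢ Set.Icc (-R) R with hs2def
  have hs2meas : MeasurableSet s2 := measurableSet_Icc.prod measurableSet_Icc
  have hF'zero : ∀ τ (q : ℝ × ℝ), q ∉ s2 → F' τ q = 0 := by
    intro τ q hq
    rcases not_and_or.1 (fun hc => hq ⟨hc.1, hc.2⟩) with h1 | h1
    · have hx := (DCL.abs_lt_of_not_mem_Icc h1).le
      simp [hF'def, va τ q.1 hx, hv11 τ q.1 hx]
    · have hx := (DCL.abs_lt_of_not_mem_Icc h1).le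
      simp [hF'def, vb τ q.2 hx, hv21 τ q.2 hx]
  have step1 : HasDerivAt
      (fun τ : ℝ => ∫ q in S, f11 (τ, q.1) * f21 (τ, q.2))
      (∫ q in S, F' t q) t := by
    have hmain := hasDerivAt_integral_of_dominated_loc_of_deriv_le
      (μ := volume.restrict S) (x₀ := t)
      (F := fun τ q => f11 (τ, q.1) * f21 (τ, q.2)) (F' := F')
      (bound := s2.indicator fun _ => C) (s := Metric.ball t 1) (Metric.ball_mem_nhds t one_pos)
      ?_ ?_ ?_ ?_ ?_ ?_
    · exact hmain.2
    · refine Filter.Eventually.of_forall fun τ => ?_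
      have : Continuous (fun q : ℝ × ℝ => f11 (τ, q.1) * f21 (τ, q.2)) := by
        have e1 : Continuous (fun q : ℝ × ℝ => ((τ, q.1) : ℝ × ℝ)) :=
          continuous_const.prodMk continuous_fst
        have e2 : Continuous (fun q : ℝ × ℝ => ((τ, q.2) : ℝ × ℝ)) :=
          continuous_const.prodMk continuous_snd
        exact (hf11.continuous.comp e1).mul (hf21.continuous.comp e2)
      exact this.aestronglyMeasurable
    · exact (DCL.prod_vanish_integrable c11 c21 (hv11 t) (hv21 t)).restrict
    · have : Continuous (F' t) := hΦcont.comp (continuous_const.prodMk continuous_id)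
      exact this.aestronglyMeasurable
    · refine Filter.Eventually.of_forall fun q => fun τ hτ => ?_
      by_cases hq : q ∈ s2
      · rw [Set.indicator_of_mem hq]
        have hd := Metric.mem_ball.1 hτ
        rw [Real.dist_eq] at hd
        have h1 := abs_le.1 hd.le
        exact hC (τ, q) ⟨⟨by linarith [h1.1], by linarith [h1.2]⟩, hq⟩
      · rw [Set.indicator_of_notMem hq, hF'zero τ q hq, norm_zero]
    · have : Integrable (s2.indicator fun _ => C) := by
        rw [integrable_indicator_iff hs2meas]
        exact integrableOn_const
          (((isCompact_Icc (a := -R) (b := R)).prod isCompact_Icc).measure_lt_top.ne)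
      exact this.restrict
    · refine Filter.Eventually.of_forall fun q => fun τ _ => ?_
      exact (DCL.tline hf11 τ q.1).mul (DCL.tline hf21 τ q.2)
  -- Step 2: identify the derivative
  have hA : Integrable (fun q : ℝ × ℝ => fderiv ℝ f11 (t, q.1) (1, 0) * f21 (t, q.2)) :=
    DCL.prod_vanish_integrable ca c21 (va t) (hv21 t)
  have hB : Integrable (fun q : ℝ × ℝ => f11 (t, q.1) * fderiv ℝ f21 (t, q.2) (1, 0)) :=
    DCL.prod_vanish_integrable c11 cb (hv11 t) (vb t)
  have split : ∫ q in S, F' t q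
      = (∫ q in S, fderiv ℝ f11 (t, q.1) (1, 0) * f21 (t, q.2))
        + ∫ q in S, f11 (t, q.1) * fderiv ℝ f21 (t, q.2) (1, 0) := by
    exact integral_add hA.restrict hB.restrict
  have fubA : ∫ q in S, fderiv ℝ f11 (t, q.1) (1, 0) * f21 (t, q.2)
      = ∫ x : ℝ, fderiv ℝ f11 (t, x) (1, 0) * H x :=
    DCL.fubini_A ca c21 (va t) (hv21 t)
  have fubB : ∫ q in S, f11 (t, q.1) * fderiv ℝ f21 (t, q.2) (1, 0)
      = ∫ y : ℝ, K y * fderiv ℝ f21 (t, y) (1, 0) :=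
    DCL.fubini_B c11 cb (hv11 t) (vb t)
  -- integration by parts for the f12 term
  have ibp1 : ∫ x : ℝ, (fderiv ℝ f12 (t, x) (0, 1) * H x - f12 (t, x) * f21 (t, x)) = 0 := by
    apply DCL.integral_deriv_zero (M := R + 1) (by linarith)
      (u := fun x => f12 (t, x) * H x)
    · intro x
      have h := (DCL.xline hf12 t x).mul (hH x)
      have e : fderiv ℝ f12 (t, x) (0, 1) * H x + f12 (t, x) * -f21 (t, x)
          = fderiv ℝ f12 (t, x) (0, 1) * H x - f12 (t, x) * f21 (t, x) := by ring
      rw [e] at h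
      exact h
    · exact ((cc.mul cH).sub (c12.mul c21))
    · intro x hx
      rw [hv12 t x (by linarith [le_abs_self x, neg_abs_le x, hx]), zero_mul]
    · intro x hx
      have hxR : R < |x| := by linarith
      rw [DCL.xderiv_zero hs12 hxR t, hv12 t x (by linarith), zero_mul, zero_mul, sub_zero]
  have ibp2 : ∫ y : ℝ, (fderiv ℝ f22 (t, y) (0, 1) * K y + f22 (t, y) * f11 (t, y)) = 0 := by
    apply DCL.integral_deriv_zero (M := R + 1) (by linarith)
      (u := fun y => f22 (t, y) * K y)
    · intro y
      have h := (DCL.xline hf22 t y).mul (hK y)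
      exact h
    · exact ((cd.mul cK).add (c22.mul c11))
    · intro y hy
      rw [hv22 t y (by linarith), zero_mul]
    · intro y hy
      have hyR : R < |y| := by linarith
      rw [DCL.xderiv_zero hs22 hyR t, hv22 t y (by linarith), zero_mul, zero_mul, add_zero]
  -- integrability of all 1d pieces
  have icH : Integrable (fun x => fderiv ℝ f12 (t, x) (0, 1) * H x) := by
    apply DCL.int_of_vanish (R := R + 1) (cc.mul cH)
    intro x hx
    show fderiv ℝ f12 (t, x) (0, 1) * H x = 0
    rw [DCL.xderiv_zero hs12 (by linarith : R < |x|) t, zero_mul]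
  have i1221 : Integrable (fun x => f12 (t, x) * f21 (t, x)) :=
    DCL.int_of_vanish (c12.mul c21) (fun x hx => by rw [hv12 t x hx, zero_mul])
  have idK : Integrable (fun y => fderiv ℝ f22 (t, y) (0, 1) * K y) := by
    apply DCL.int_of_vanish (R := R + 1) (cd.mul cK)
    intro y hy
    show fderiv ℝ f22 (t, y) (0, 1) * K y = 0
    rw [DCL.xderiv_zero hs22 (by linarith : R < |y|) t, zero_mul]
  have i2211 : Integrable (fun y => f22 (t, y) * f11 (t, y)) :=
    DCL.int_of_vanish (c22.mul c11) (fun y hy => by rw [hv22 t y hy, zero_mul])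
  have iG1H : Integrable (fun x => G1 (t, x) * H x) :=
    DCL.int_of_vanish (cG1.mul cH)
      (fun x hx => by rw [(hsupp (t, x) hx).2.2.2.2.1, zero_mul])
  have iKG2 : Integrable (fun y => K y * G2 (t, y)) :=
    DCL.int_of_vanish (cK.mul cG2)
      (fun y hy => by rw [(hsupp (t, y) hy).2.2.2.2.2, mul_zero])
  have i1122 : Integrable (fun x => f11 (t, x) * f22 (t, x)) :=
    DCL.int_of_vanish (c11.mul c22) (fun x hx => by rw [hv11 t x hx, zero_mul])
  -- rewrite the a-term using heq1
  have haH : ∫ x : ℝ, fderiv ℝ f11 (t, x) (1, 0) * H x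
      = (∫ x : ℝ, G1 (t, x) * H x) - ∫ x : ℝ, fderiv ℝ f12 (t, x) (0, 1) * H x := by
    rw [← integral_sub iG1H icH]
    congr 1
    funext x
    have e := heq1 (t, x)
    rw [← e]
    ring
  have hbK : ∫ y : ℝ, K y * fderiv ℝ f21 (t, y) (1, 0)
      = (∫ y : ℝ, K y * G2 (t, y)) + ∫ y : ℝ, fderiv ℝ f22 (t, y) (0, 1) * K y := by
    rw [← integral_add iKG2 idK]
    congr 1
    funext y
    have e := heq2 (t, y)
    rw [← e]
    ring
  -- evaluate the two IBP integrals
  have ibp1' : ∫ x : ℝ, fderiv ℝ f12 (t, x) (0, 1) * H x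
      = ∫ x : ℝ, f12 (t, x) * f21 (t, x) := by
    have := integral_sub icH i1221
    rw [ibp1] at this
    linarith [this]
  have ibp2' : ∫ y : ℝ, fderiv ℝ f22 (t, y) (0, 1) * K y
      = -∫ y : ℝ, f22 (t, y) * f11 (t, y) := by
    have := integral_add idK i2211
    rw [ibp2] at this
    linarith [this]
  -- final bookkeeping
  have final : ∫ q in S, F' t q
      = (∫ x : ℝ, (∫ z in Set.Iio x, f11 (t, z)) * G2 (t, x)) +
          (∫ x : ℝ, (∫ z in Set.Ioi x, f21 (t, z)) * G1 (t, x)) -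
          ∫ x : ℝ, (f11 (t, x) * f22 (t, x) + f12 (t, x) * f21 (t, x)) := by
    rw [split, fubA, fubB, haH, hbK, ibp1', ibp2']
    have e1 : ∫ x : ℝ, (∫ z in Set.Iio x, f11 (t, z)) * G2 (t, x)
        = ∫ y : ℝ, K y * G2 (t, y) := rfl
    have e2 : ∫ x : ℝ, (∫ z in Set.Ioi x, f21 (t, z)) * G1 (t, x)
        = ∫ x : ℝ, G1 (t, x) * H x := by
      congr 1
      funext x
      rw [mul_comm]
    have e3 : ∫ x : ℝ, (f11 (t, x) * f22 (t, x) + f12 (t, x) * f21 (t, x))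
        = (∫ x : ℝ, f11 (t, x) * f22 (t, x)) + ∫ x : ℝ, f12 (t, x) * f21 (t, x) :=
      integral_add i1122 i1221
    have e4 : ∫ y : ℝ, f22 (t, y) * f11 (t, y) = ∫ x : ℝ, f11 (t, x) * f22 (t, x) := by
      congr 1
      funext y
      rw [mul_comm]
    rw [e1, e2, e3, e4]
    ring
  rw [← final]
  exact step1
end

section
/- Under the frame setup with S, v of class C², for all coordinate indices α, β one has the pointwise compatibility (covariant curl) relation ∂_α ψ_β + i A_α ψ_β = ∂_β ψ_α + i A_β ψ_α, i.e. D_α ψ_β = D_β ψ_α. -/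
open Matrix

/-- Partial derivative of `f` in the `α`-th coordinate direction. -/
noncomputable def pd {n : ℕ} {E : Type*} [NormedAddCommGroup E] [NormedSpace ℝ E]
    (f : (Fin n → ℝ) → E) (α : Fin n) (p : Fin n → ℝ) : E :=
  fderiv ℝ f p (Pi.single α 1)

/-- The complexified differentiated field `ψ_α = ⟨v, ∂_α S⟩ + i ⟨w, ∂_α S⟩`. -/
noncomputable def framePsi {n : ℕ} (S v w : (Fin n → ℝ) → Fin 3 → ℝ) (α : Fin n)
    (p : Fin n → ℝ) : ℂ :=
  ((v p ⬝ᵥ pd S α p : ℝ) : ℂ) + Complex.I * ((w p ⬝ᵥ pd S α p : ℝ) : ℂ)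

/-- The real connection coefficient `A_α = ⟨w, ∂_α v⟩`. -/
noncomputable def frameA {n : ℕ} (v w : (Fin n → ℝ) → Fin 3 → ℝ) (α : Fin n)
    (p : Fin n → ℝ) : ℝ :=
  w p ⬝ᵥ pd v α p

/-- Completeness relation for an orthonormal frame `(s, u, s ×₃ u)` of `ℝ³`. -/
lemma frame_complete (s u x y : Fin 3 → ℝ) (hs : s ⬝ᵥ s = 1) (hu : u ⬝ᵥ u = 1)
    (hsu : s ⬝ᵥ u = 0) :
    x ⬝ᵥ y = (s ⬝ᵥ x) * (s ⬝ᵥ y) + (u ⬝ᵥ x) * (u ⬝ᵥ y)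
      + (crossProduct s u ⬝ᵥ x) * (crossProduct s u ⬝ᵥ y) := by
  simp only [crossProduct, LinearMap.mk₂_apply, dotProduct, Fin.sum_univ_three,
    Matrix.cons_val_zero, Matrix.cons_val_one, Matrix.head_cons, Matrix.cons_val_two,
    Matrix.tail_cons] at *
  linear_combination (-( (u 0^2+u 1^2+u 2^2) * (x 0*y 0+x 1*y 1+x 2*y 2)) + (u 0*y 0+u 1*y 1+u 2*y 2)*(u 0*x 0+u 1*x 1+u 2*x 2)) * hs
    + (-(x 0*y 0+x 1*y 1+x 2*y 2) + (s 0*y 0+s 1*y 1+s 2*y 2)*(s 0*x 0+s 1*x 1+s 2*x 2)) * hu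
    + ((s 0*u 0+s 1*u 1+s 2*u 2)*(x 0*y 0+x 1*y 1+x 2*y 2) - (u 0*y 0+u 1*y 1+u 2*y 2)*(s 0*x 0+s 1*x 1+s 2*x 2) - (s 0*y 0+s 1*y 1+s 2*y 2)*(u 0*x 0+u 1*x 1+u 2*x 2)) * hsu

lemma diffAt_dot {n : ℕ} {f g : (Fin n → ℝ) → Fin 3 → ℝ} {p : Fin n → ℝ}
    (hf : DifferentiableAt ℝ f p) (hg : DifferentiableAt ℝ g p) :
    DifferentiableAt ℝ (fun q => f q ⬝ᵥ g q) p := by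
  simp only [dotProduct]
  exact DifferentiableAt.fun_sum fun i _ =>
    ((differentiableAt_pi.1 hf i).mul (differentiableAt_pi.1 hg i))

lemma pd_eval {n : ℕ} {f : (Fin n → ℝ) → Fin 3 → ℝ} {p : Fin n → ℝ} (α : Fin n) (i : Fin 3)
    (hf : DifferentiableAt ℝ f p) :
    pd (fun q => f q i) α p = pd f α p i := by
  have h := (ContinuousLinearMap.proj (R := ℝ) (φ := fun _ : Fin 3 => ℝ) i).hasFDerivAt.comp p
    hf.hasFDerivAt
  show fderiv ℝ ((ContinuousLinearMap.proj (R := ℝ) (φ := fun _ : Fin 3 => ℝ) i) ∘ f) p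
    (Pi.single α 1) = fderiv ℝ f p (Pi.single α 1) i
  rw [h.fderiv]; rfl

lemma pd_dot {n : ℕ} {f g : (Fin n → ℝ) → Fin 3 → ℝ} {p : Fin n → ℝ} (α : Fin n)
    (hf : DifferentiableAt ℝ f p) (hg : DifferentiableAt ℝ g p) :
    pd (fun q => f q ⬝ᵥ g q) α p = pd f α p ⬝ᵥ g p + f p ⬝ᵥ pd g α p := by
  simp only [dotProduct]
  have h : ∀ i ∈ Finset.univ, DifferentiableAt ℝ (fun q => f q i * g q i) p := fun i _ =>
    (differentiableAt_pi.1 hf i).mul (differentiableAt_pi.1 hg i)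
  have hsum := fderiv_fun_sum (u := Finset.univ) (A := fun i q => f q i * g q i) (x := p) h
  rw [pd, hsum, ContinuousLinearMap.sum_apply]
  have step : ∀ i : Fin 3, fderiv ℝ (fun q => f q i * g q i) p (Pi.single α 1)
      = pd f α p i * g p i + f p i * pd g α p i := by
    intro i
    rw [fderiv_fun_mul (differentiableAt_pi.1 hf i) (differentiableAt_pi.1 hg i)]
    simp only [ContinuousLinearMap.add_apply, ContinuousLinearMap.smul_apply, smul_eq_mul]
    rw [← pd, ← pd, pd_eval α i hf, pd_eval α i hg]; ring
  rw [Finset.sum_congr rfl fun i _ => step i, Finset.sum_add_distrib]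

lemma pd_diff {n : ℕ} {f : (Fin n → ℝ) → Fin 3 → ℝ} (hf : ContDiff ℝ 2 f) (β : Fin n) :
    Differentiable ℝ (pd f β) := by
  have h1 : ContDiff ℝ 1 (fderiv ℝ f) := hf.fderiv_right (by norm_num)
  have : pd f β = fun q =>
      (ContinuousLinearMap.apply ℝ (Fin 3 → ℝ) (Pi.single β 1)) (fderiv ℝ f q) := rfl
  rw [this]
  exact (ContinuousLinearMap.apply ℝ (Fin 3 → ℝ) (Pi.single β 1)).differentiable.comp
    (h1.differentiable (by norm_num))

lemma pd_comm {n : ℕ} {f : (Fin n → ℝ) → Fin 3 → ℝ} (hf : ContDiff ℝ 2 f) (α β : Fin n)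
    (p : Fin n → ℝ) : pd (pd f β) α p = pd (pd f α) β p := by
  have h1 : ContDiff ℝ 1 (fderiv ℝ f) := hf.fderiv_right (by norm_num)
  have hd : ∀ y, HasFDerivAt f (fderiv ℝ f y) y := fun y =>
    (hf.differentiable (by norm_num) y).hasFDerivAt
  have h2 : HasFDerivAt (fderiv ℝ f) (fderiv ℝ (fderiv ℝ f) p) p :=
    (h1.differentiable (by norm_num) p).hasFDerivAt
  have key : ∀ γ δ : Fin n, pd (pd f γ) δ p
      = fderiv ℝ (fderiv ℝ f) p (Pi.single δ 1) (Pi.single γ 1) := by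
    intro γ δ
    have hc := (ContinuousLinearMap.apply ℝ (Fin 3 → ℝ) (Pi.single γ 1)).hasFDerivAt.comp p h2
    show fderiv ℝ ((ContinuousLinearMap.apply ℝ (Fin 3 → ℝ) (Pi.single γ 1)) ∘ (fderiv ℝ f)) p
      (Pi.single δ 1) = _
    rw [hc.fderiv]; rfl
  rw [key β α, key α β]
  exact second_derivative_symmetric hd h2 _ _

lemma pd_ofReal {n : ℕ} {f : (Fin n → ℝ) → ℝ} {p : Fin n → ℝ} (α : Fin n)
    (hf : DifferentiableAt ℝ f p) :
    pd (fun q => ((f q : ℝ) : ℂ)) α p = ((pd f α p : ℝ) : ℂ) := by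
  have h := Complex.ofRealCLM.hasFDerivAt.comp p hf.hasFDerivAt
  show fderiv ℝ (Complex.ofRealCLM ∘ f) p (Pi.single α 1) = _
  rw [h.fderiv]; rfl

/-- Compatibility (covariant curl) relation `D_α ψ_β = D_β ψ_α`, i.e.
`∂_α ψ_β + i A_α ψ_β = ∂_β ψ_α + i A_β ψ_α`. -/
theorem frame_covariant_curl {n : ℕ}
    (S v : (Fin n → ℝ) → Fin 3 → ℝ)
    (hS : ContDiff ℝ 2 S) (hv : ContDiff ℝ 2 v)
    (hS1 : ∀ p, S p ⬝ᵥ S p = 1) (hv1 : ∀ p, v p ⬝ᵥ v p = 1)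
    (hSv : ∀ p, S p ⬝ᵥ v p = 0)
    (w : (Fin n → ℝ) → Fin 3 → ℝ) (hw : ∀ p, w p = crossProduct (S p) (v p)) :
    ∀ (α β : Fin n) (p : Fin n → ℝ),
      pd (framePsi S v w β) α p + Complex.I * (frameA v w α p : ℂ) * framePsi S v w β p =
        pd (framePsi S v w α) β p + Complex.I * (frameA v w β p : ℂ) * framePsi S v w α p := by
  intro α β p
  have hSd : Differentiable ℝ S := hS.differentiable (by norm_num)
  have hvd : Differentiable ℝ v := hv.differentiable (by norm_num)
  have hwd : Differentiable ℝ w := by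
    have hwe : w = fun q => crossProduct (S q) (v q) := funext hw
    rw [hwe]
    intro x
    rw [differentiableAt_pi]
    intro i
    have hc : ∀ j, DifferentiableAt ℝ (fun q => S q j) x := fun j =>
      differentiableAt_pi.1 (hSd x) j
    have hc' : ∀ j, DifferentiableAt ℝ (fun q => v q j) x := fun j =>
      differentiableAt_pi.1 (hvd x) j
    fin_cases i <;>
      simp only [cross_apply, Matrix.cons_val_zero, Matrix.cons_val_one, Matrix.head_cons,
        Matrix.cons_val_two, Matrix.tail_cons, Fin.isValue] <;>
      exact ((hc _).mul (hc' _)).sub ((hc _).mul (hc' _))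
  have hpdS : ∀ γ, Differentiable ℝ (pd S γ) := pd_diff hS
  -- pointwise orthonormality of the full frame
  have hww : ∀ q, w q ⬝ᵥ w q = 1 := fun q => by
    rw [hw, cross_dot_cross, hS1, hv1, hSv]; ring
  have hSw : ∀ q, S q ⬝ᵥ w q = 0 := fun q => by rw [hw]; exact dot_self_cross _ _
  have hvw : ∀ q, v q ⬝ᵥ w q = 0 := fun q => by rw [hw]; exact dot_cross_self _ _
  -- derivative of constant dot products
  have key0 : ∀ (f g : (Fin n → ℝ) → Fin 3 → ℝ), Differentiable ℝ f → Differentiable ℝ g →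
      ∀ (c : ℝ), (∀ q, f q ⬝ᵥ g q = c) →
      ∀ (γ : Fin n) (q : Fin n → ℝ), pd f γ q ⬝ᵥ g q + f q ⬝ᵥ pd g γ q = 0 := by
    intro f g hf hg c hc γ q
    have h0 : pd (fun q => f q ⬝ᵥ g q) γ q = 0 := by
      have he : (fun q => f q ⬝ᵥ g q) = fun _ => c := funext hc
      rw [pd, he, fderiv_fun_const]; simp
    rw [pd_dot γ (hf q) (hg q)] at h0
    exact h0
  have e1 : ∀ (γ : Fin n) (q : Fin n → ℝ), S q ⬝ᵥ pd S γ q = 0 := by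
    intro γ q
    have := key0 S S hSd hSd 1 hS1 γ q
    rw [dotProduct_comm (pd S γ q)] at this
    linarith
  have e2 : ∀ (γ : Fin n) (q : Fin n → ℝ), v q ⬝ᵥ pd v γ q = 0 := by
    intro γ q
    have := key0 v v hvd hvd 1 hv1 γ q
    rw [dotProduct_comm (pd v γ q)] at this
    linarith
  have e4 : ∀ (γ : Fin n) (q : Fin n → ℝ), w q ⬝ᵥ pd w γ q = 0 := by
    intro γ q
    have := key0 w w hwd hwd 1 hww γ q
    rw [dotProduct_comm (pd w γ q)] at this
    linarith
  have e6 : ∀ (γ : Fin n) (q : Fin n → ℝ), v q ⬝ᵥ pd w γ q = -(w q ⬝ᵥ pd v γ q) := by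
    intro γ q
    have := key0 v w hvd hwd 0 hvw γ q
    rw [dotProduct_comm (pd v γ q)] at this
    linarith
  -- completeness evaluations of the cross terms
  have complete : ∀ (q : Fin n → ℝ) (x y : Fin 3 → ℝ),
      x ⬝ᵥ y = (S q ⬝ᵥ x) * (S q ⬝ᵥ y) + (v q ⬝ᵥ x) * (v q ⬝ᵥ y)
        + (w q ⬝ᵥ x) * (w q ⬝ᵥ y) := by
    intro q x y
    rw [hw]
    exact frame_complete (S q) (v q) x y (hS1 q) (hv1 q) (hSv q)
  have cross1 : ∀ (γ δ : Fin n) (q : Fin n → ℝ),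
      pd v γ q ⬝ᵥ pd S δ q = (w q ⬝ᵥ pd v γ q) * (w q ⬝ᵥ pd S δ q) := by
    intro γ δ q
    rw [complete q (pd v γ q) (pd S δ q), e1 δ q, e2 γ q]
    ring
  have cross2 : ∀ (γ δ : Fin n) (q : Fin n → ℝ),
      pd w γ q ⬝ᵥ pd S δ q = -((w q ⬝ᵥ pd v γ q) * (v q ⬝ᵥ pd S δ q)) := by
    intro γ δ q
    rw [complete q (pd w γ q) (pd S δ q), e1 δ q, e4 γ q, e6 γ q]
    ring
  -- expansion of the derivative of framePsi
  have hpsi : ∀ (γ δ : Fin n) (q : Fin n → ℝ),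
      pd (framePsi S v w δ) γ q =
        ((pd v γ q ⬝ᵥ pd S δ q + v q ⬝ᵥ pd (pd S δ) γ q : ℝ) : ℂ)
          + Complex.I * ((pd w γ q ⬝ᵥ pd S δ q + w q ⬝ᵥ pd (pd S δ) γ q : ℝ) : ℂ) := by
    intro γ δ q
    have ha : DifferentiableAt ℝ (fun r => v r ⬝ᵥ pd S δ r) q :=
      diffAt_dot (hvd q) (hpdS δ q)
    have hb : DifferentiableAt ℝ (fun r => w r ⬝ᵥ pd S δ r) q :=
      diffAt_dot (hwd q) (hpdS δ q)
    have ha' : DifferentiableAt ℝ (fun r => ((v r ⬝ᵥ pd S δ r : ℝ) : ℂ)) q :=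
      Complex.ofRealCLM.differentiable.differentiableAt.comp q ha
    have hb' : DifferentiableAt ℝ (fun r => ((w r ⬝ᵥ pd S δ r : ℝ) : ℂ)) q :=
      Complex.ofRealCLM.differentiable.differentiableAt.comp q hb
    have he : framePsi S v w δ = fun r => ((v r ⬝ᵥ pd S δ r : ℝ) : ℂ)
        + Complex.I * ((w r ⬝ᵥ pd S δ r : ℝ) : ℂ) := rfl
    rw [he, pd, fderiv_fun_add ha' (hb'.const_mul Complex.I), ContinuousLinearMap.add_apply,
      fderiv_const_mul hb' Complex.I, ContinuousLinearMap.smul_apply, smul_eq_mul,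
      ← pd, ← pd, pd_ofReal γ ha, pd_ofReal γ hb, pd_dot γ (hvd q) (hpdS δ q),
      pd_dot γ (hwd q) (hpdS δ q)]
  -- put everything together
  rw [hpsi α β p, hpsi β α p, cross1 α β p, cross1 β α p, cross2 α β p, cross2 β α p,
    pd_comm hS α β p]
  simp only [framePsi, frameA]
  push_cast
  simp only [Complex.ext_iff, Complex.add_re, Complex.add_im, Complex.mul_re, Complex.mul_im,
    Complex.I_re, Complex.I_im, Complex.ofReal_re, Complex.ofReal_im, Complex.neg_re,
    Complex.neg_im]
  constructor <;> ring
end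

section
/- Under the frame setup with two distinguished coordinate indices 1, 2, one has the pointwise identity for the topological charge density: ⟨S, ∂₁ S × ∂₂ S⟩ = Im( ψ₂ · conj(ψ₁) ) = ∂₂ A₁ − ∂₁ A₂. -/
open Matrix

noncomputable def dotCLM : (Fin 3 → ℝ) →L[ℝ] (Fin 3 → ℝ) →L[ℝ] ℝ :=
  LinearMap.toContinuousLinearMap
    { toFun := fun x => LinearMap.toContinuousLinearMap
        { toFun := fun y => x ⬝ᵥ y
          map_add' := fun y z => dotProduct_add x y z
          map_smul' := fun c y => by simp [dotProduct_smul, smul_eq_mul] }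
      map_add' := fun x y => by ext z; simp [add_dotProduct]
      map_smul' := fun c x => by ext z; simp [smul_dotProduct, smul_eq_mul] }

@[simp] lemma dotCLM_apply (x y : Fin 3 → ℝ) : dotCLM x y = x ⬝ᵥ y := rfl

noncomputable def crossCLM : (Fin 3 → ℝ) →L[ℝ] (Fin 3 → ℝ) →L[ℝ] (Fin 3 → ℝ) :=
  LinearMap.toContinuousLinearMap
    { toFun := fun x => LinearMap.toContinuousLinearMap (crossProduct x)
      map_add' := fun x y => by ext z; simp [map_add, LinearMap.add_apply]
      map_smul' := fun c x => by ext z; simp [_root_.map_smul, LinearMap.smul_apply] }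

@[simp] lemma crossCLM_apply (x y : Fin 3 → ℝ) : crossCLM x y = crossProduct x y := rfl

variable {n : ℕ}

lemma fderiv_bilin {F : Type*} [NormedAddCommGroup F] [NormedSpace ℝ F]
    (B : (Fin 3 → ℝ) →L[ℝ] (Fin 3 → ℝ) →L[ℝ] F)
    {f g : (Fin n → ℝ) → Fin 3 → ℝ} {p : Fin n → ℝ}
    (hf : DifferentiableAt ℝ f p) (hg : DifferentiableAt ℝ g p) (e : Fin n → ℝ) :
    fderiv ℝ (fun q => B (f q) (g q)) p e
      = B (fderiv ℝ f p e) (g p) + B (f p) (fderiv ℝ g p e) := by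
  have hc : HasFDerivAt (fun q => B (f q)) (B.comp (fderiv ℝ f p)) p :=
    B.hasFDerivAt.comp p hf.hasFDerivAt
  rw [(hc.clm_apply hg.hasFDerivAt).fderiv]
  simp [add_comm]

private lemma psiIm (α₁ β₁ α₂ β₂ : ℝ) :
    (((α₂ : ℂ) + Complex.I * (β₂ : ℂ)) * (starRingEnd ℂ) ((α₁ : ℂ) + Complex.I * (β₁ : ℂ))).im
      = β₂ * α₁ - α₂ * β₁ := by
  simp [Complex.mul_im]
  ring

private lemma alg1 (S V A B : Fin 3 → ℝ) (g2 : V ⬝ᵥ V = 1) (g3 : S ⬝ᵥ V = 0) :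
    S ⬝ᵥ crossProduct A B =
      (crossProduct S V ⬝ᵥ B) * (V ⬝ᵥ A) - (V ⬝ᵥ B) * (crossProduct S V ⬝ᵥ A) := by
  simp only [cross_apply, dotProduct, Fin.sum_univ_three, Matrix.cons_val_zero,
    Matrix.cons_val_one, Matrix.head_cons, Matrix.cons_val_two, Matrix.tail_cons] at *
  linear_combination ((-1) * S 0 * A 1 * B 2 + S 0 * A 2 * B 1 + S 1 * A 0 * B 2 + (-1) * S 1 * A 2 * B 0 + (-1) * S 2 * A 0 * B 1 + S 2 * A 1 * B 0) * g2 + (V 0 * A 1 * B 2 + (-1) * V 0 * A 2 * B 1 + (-1) * V 1 * A 0 * B 2 + V 1 * A 2 * B 0 + V 2 * A 0 * B 1 + (-1) * V 2 * A 1 * B 0) * g3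

private lemma alg2 (S V A B C D : Fin 3 → ℝ)
    (g1 : S ⬝ᵥ S = 1) (g2 : V ⬝ᵥ V = 1) (g3 : S ⬝ᵥ V = 0)
    (g4 : A ⬝ᵥ S + S ⬝ᵥ A = 0) (g5 : B ⬝ᵥ S + S ⬝ᵥ B = 0)
    (g6 : C ⬝ᵥ V + V ⬝ᵥ C = 0) (g7 : D ⬝ᵥ V + V ⬝ᵥ D = 0)
    (g8 : A ⬝ᵥ V + S ⬝ᵥ C = 0) (g9 : B ⬝ᵥ V + S ⬝ᵥ D = 0) :
    (crossProduct S V ⬝ᵥ B) * (V ⬝ᵥ A) - (V ⬝ᵥ B) * (crossProduct S V ⬝ᵥ A) =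
      ((crossProduct B V + crossProduct S D) ⬝ᵥ C) -
        ((crossProduct A V + crossProduct S C) ⬝ᵥ D) := by
  simp only [cross_apply, dotProduct, Fin.sum_univ_three, Matrix.cons_val_zero,
    Matrix.cons_val_one, Matrix.head_cons, Matrix.cons_val_two, Matrix.tail_cons,
    Pi.add_apply] at *
  linear_combination ((1) * V 0 * A 1 * D 2 + (-1) * V 0 * A 2 * D 1 + (-1) * V 0 * B 1 * C 2 + (1) * V 0 * B 2 * C 1 + (-1) * V 1 * A 0 * D 2 + (1) * V 1 * A 2 * D 0 + (1) * V 1 * B 0 * C 2 + (-1) * V 1 * B 2 * C 0 + (1) * V 2 * A 0 * D 1 + (-1) * V 2 * A 1 * D 0 + (-1) * V 2 * B 0 * C 1 + (1) * V 2 * B 1 * C 0) * g1 + ((-2) * S 0 * C 1 * D 2 + (2) * S 0 * C 2 * D 1 + (2) * S 1 * C 0 * D 2 + (-2) * S 1 * C 2 * D 0 + (-2) * S 2 * C 0 * D 1 + (2) * S 2 * C 1 * D 0) * g2 + ((-1) * S 0 * A 1 * D 2 + (1) * S 0 * A 2 * D 1 + (1) * S 0 * B 1 * C 2 + (-1) *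 S 0 * B 2 * C 1 + (1) * S 1 * A 0 * D 2 + (-1) * S 1 * A 2 * D 0 + (-1) * S 1 * B 0 * C 2 + (1) * S 1 * B 2 * C 0 + (-1) * S 2 * A 0 * D 1 + (1) * S 2 * A 1 * D 0 + (1) * S 2 * B 0 * C 1 + (-1) * S 2 * B 1 * C 0 + (2) * V 0 * C 1 * D 2 + (-2) * V 0 * C 2 * D 1 + (-2) * V 1 * C 0 * D 2 + (2) * V 1 * C 2 * D 0 + (2) * V 2 * C 0 * D 1 + (-2) * V 2 * C 1 * D 0) * g3 + ((1/2) * S 0 * V 1 * D 2 + (-1/2) * S 0 * V 2 * D 1 + (-1/2) * S 1 * V 0 * D 2 + (1/2) * S 1 * V 2 * D 0 + (1/2) * S 2 * V 0 * D 1 + (-1/2) * S 2 * V 1 * D 0) * g4 + ((-1/2) * S 0 * V 1 * C 2 + (1/2) * S 0 * V 2 * C 1 + (1/2) * S 1 * V 0 * C 2 + (-1/2) * S 1 * V 2 * C 0 + (-1/2) * S 2 * V 0 * C 1 + (1/2) * S 2 * V 1 * C 0) * g5 + ((1) * S 0 * V 1 * D 2 + (-1) * S 0 * V 2 * D 1 +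 (-1) * S 1 * V 0 * D 2 + (1) * S 1 * V 2 * D 0 + (1) * S 2 * V 0 * D 1 + (-1) * S 2 * V 1 * D 0) * g6 + ((-1) * S 0 * V 1 * C 2 + (1) * S 0 * V 2 * C 1 + (1) * S 1 * V 0 * C 2 + (-1) * S 1 * V 2 * C 0 + (-1) * S 2 * V 0 * C 1 + (1) * S 2 * V 1 * C 0) * g7 + ((1) * S 0 * V 1 * B 2 + (-1) * S 0 * V 2 * B 1 + (-1) * S 1 * V 0 * B 2 + (1) * S 1 * V 2 * B 0 + (1) * S 2 * V 0 * B 1 + (-1) * S 2 * V 1 * B 0) * g8 + ((-1) * S 0 * V 1 * A 2 + (1) * S 0 * V 2 * A 1 + (1) * S 1 * V 0 * A 2 + (-1) * S 1 * V 2 * A 0 + (-1) * S 2 * V 0 * A 1 + (1) * S 2 * V 1 * A 0) * g9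

/-- Topological charge density identity:
`⟨S, ∂₁S × ∂₂S⟩ = Im(ψ₂ conj(ψ₁)) = ∂₂ A₁ − ∂₁ A₂`. -/
theorem topological_charge_density {n : ℕ} (hn : 2 ≤ n)
    (S v : (Fin n → ℝ) → Fin 3 → ℝ)
    (hS : ContDiff ℝ 2 S) (hv : ContDiff ℝ 2 v)
    (hS1 : ∀ p, S p ⬝ᵥ S p = 1) (hv1 : ∀ p, v p ⬝ᵥ v p = 1)
    (hSv : ∀ p, S p ⬝ᵥ v p = 0)
    (w : (Fin n → ℝ) → Fin 3 → ℝ) (hw : ∀ p, w p = crossProduct (S p) (v p))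
    (i₁ i₂ : Fin n) (hi₁ : (i₁ : ℕ) = 0) (hi₂ : (i₂ : ℕ) = 1) :
    ∀ p : Fin n → ℝ,
      S p ⬝ᵥ crossProduct (pd S i₁ p) (pd S i₂ p) =
          (framePsi S v w i₂ p * (starRingEnd ℂ) (framePsi S v w i₁ p)).im ∧
      (framePsi S v w i₂ p * (starRingEnd ℂ) (framePsi S v w i₁ p)).im =
          pd (frameA v w i₁) i₂ p - pd (frameA v w i₂) i₁ p := by
  intro p
  have hdS : Differentiable ℝ S := hS.differentiable (by norm_num)
  have hdv : Differentiable ℝ v := hv.differentiable (by norm_num)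
  have hw' : w = fun q => crossProduct (S q) (v q) := funext hw
  -- derivative of a dot product
  have hdot : ∀ (f g : (Fin n → ℝ) → Fin 3 → ℝ), Differentiable ℝ f → Differentiable ℝ g →
      ∀ (e : Fin n → ℝ), fderiv ℝ (fun q => f q ⬝ᵥ g q) p e
        = fderiv ℝ f p e ⬝ᵥ g p + f p ⬝ᵥ fderiv ℝ g p e := by
    intro f g hf hg e
    have := fderiv_bilin dotCLM (hf p) (hg p) e
    simpa using this
  -- derivative of a constant dot product
  have hconst : ∀ (f g : (Fin n → ℝ) → Fin 3 → ℝ) (c : ℝ), Differentiable ℝ f →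
      Differentiable ℝ g → (∀ q, f q ⬝ᵥ g q = c) →
      ∀ (e : Fin n → ℝ), fderiv ℝ f p e ⬝ᵥ g p + f p ⬝ᵥ fderiv ℝ g p e = 0 := by
    intro f g c hf hg hfg e
    rw [← hdot f g hf hg e]
    have hfg' : (fun q => f q ⬝ᵥ g q) = fun _ => c := funext hfg
    rw [hfg', fderiv_fun_const]
    simp
  have hdw : Differentiable ℝ w := by
    rw [hw']
    have h1 : Differentiable ℝ (fun q => crossCLM (S q)) := crossCLM.differentiable.comp hdS
    simpa using h1.clm_apply hdv
  have hDw : ∀ e, fderiv ℝ w p e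
      = crossProduct (fderiv ℝ S p e) (v p) + crossProduct (S p) (fderiv ℝ v p e) := by
    intro e
    rw [hw']
    have := fderiv_bilin crossCLM (hdS p) (hdv p) e
    simpa using this
  have hfv : ContDiff ℝ 1 (fderiv ℝ v) := hv.fderiv_right (by norm_num)
  have hdfv : Differentiable ℝ (fderiv ℝ v) := hfv.differentiable (by norm_num)
  have hdpdv : ∀ e : Fin n → ℝ, Differentiable ℝ (fun q => fderiv ℝ v q e) :=
    fun e => hdfv.clm_apply (differentiable_const e)
  have hsym : IsSymmSndFDerivAt ℝ v p := hv.contDiffAt.isSymmSndFDerivAt (by norm_num)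
  have hswap : ∀ e e' : Fin n → ℝ, fderiv ℝ (fun q => fderiv ℝ v q e) p e'
      = fderiv ℝ (fun q => fderiv ℝ v q e') p e := by
    intro e e'
    rw [fderiv_clm_apply (hdfv p) (differentiableAt_const e),
        fderiv_clm_apply (hdfv p) (differentiableAt_const e')]
    simpa using hsym e' e
  have key : ∀ (eA eB : Fin n → ℝ),
      fderiv ℝ (fun q => w q ⬝ᵥ fderiv ℝ v q eA) p eB
        = (crossProduct (fderiv ℝ S p eB) (v p) + crossProduct (S p) (fderiv ℝ v p eB))
            ⬝ᵥ fderiv ℝ v p eA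
          + w p ⬝ᵥ fderiv ℝ (fun q => fderiv ℝ v q eA) p eB := by
    intro eA eB
    rw [hdot w (fun q => fderiv ℝ v q eA) hdw (hdpdv eA) eB, hDw eB]
  -- notation
  set A : Fin 3 → ℝ := fderiv ℝ S p (Pi.single i₁ 1) with hA
  set B : Fin 3 → ℝ := fderiv ℝ S p (Pi.single i₂ 1) with hB
  set C : Fin 3 → ℝ := fderiv ℝ v p (Pi.single i₁ 1) with hC
  set D : Fin 3 → ℝ := fderiv ℝ v p (Pi.single i₂ 1) with hD
  have g4 := hconst S S 1 hdS hdS hS1 (Pi.single i₁ 1)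
  have g5 := hconst S S 1 hdS hdS hS1 (Pi.single i₂ 1)
  have g6 := hconst v v 1 hdv hdv hv1 (Pi.single i₁ 1)
  have g7 := hconst v v 1 hdv hdv hv1 (Pi.single i₂ 1)
  have g8 := hconst S v 0 hdS hdv hSv (Pi.single i₁ 1)
  have g9 := hconst S v 0 hdS hdv hSv (Pi.single i₂ 1)
  have hA₁ : frameA v w i₁ = fun q => w q ⬝ᵥ fderiv ℝ v q (Pi.single i₁ 1) := rfl
  have hA₂ : frameA v w i₂ = fun q => w q ⬝ᵥ fderiv ℝ v q (Pi.single i₂ 1) := rfl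
  have h2 : pd (frameA v w i₁) i₂ p - pd (frameA v w i₂) i₁ p
      = ((crossProduct B (v p) + crossProduct (S p) D) ⬝ᵥ C)
        - ((crossProduct A (v p) + crossProduct (S p) C) ⬝ᵥ D) := by
    simp only [pd, hA₁, hA₂]
    rw [key (Pi.single i₁ 1) (Pi.single i₂ 1), key (Pi.single i₂ 1) (Pi.single i₁ 1),
        hswap (Pi.single i₁ 1) (Pi.single i₂ 1)]
    ring
  have hIm : (framePsi S v w i₂ p * (starRingEnd ℂ) (framePsi S v w i₁ p)).im
      = (crossProduct (S p) (v p) ⬝ᵥ B) * (v p ⬝ᵥ A)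
        - (v p ⬝ᵥ B) * (crossProduct (S p) (v p) ⬝ᵥ A) := by
    simp only [framePsi, pd, ← hA, ← hB]
    rw [psiIm, hw p]
  constructor
  · rw [hIm]
    simp only [pd, ← hA, ← hB]
    exact alg1 (S p) (v p) A B (hv1 p) (hSv p)
  · rw [hIm, h2]
    exact alg2 (S p) (v p) A B C D (hS1 p) (hv1 p) (hSv p) g4 g5 g6 g7 g8 g9
end

section
/- Let δ̃ ∈ (0, 1/2). There exists a constant C > 0 depending only on δ̃ such that for every sequence β : ℤ → (0,∞) satisfying the slow variation condition β_k ≤ 2^{δ̃|k−k'|} β_{k'} for all k, k' ∈ ℤ, and for all k, j ∈ ℤ, one has Σ_{k' ≤ k} 2^{k'} (1 + 2^{2(k'+j)})^{−1} β_{k'} ≤ C · ( min(2^k, 2^{−j}) )^{1−δ̃} · 2^{−δ̃ j} · β_{−j}. -/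
lemma aux_qpow {a : ℝ} (n : ℕ) : (2:ℝ) ^ (-(a * (n:ℝ))) = ((2:ℝ)^(-a)) ^ n := by
  rw [← Real.rpow_natCast ((2:ℝ)^(-a)) n, ← Real.rpow_mul (by norm_num)]
  ring_nf

lemma aux_summable {a : ℝ} (ha0 : 0 < a) (N : ℝ) :
    Summable (fun n : ℕ => (2:ℝ) ^ (-(a * |N - (n:ℝ)|))) := by
  have hq0 : (0:ℝ) ≤ (2:ℝ)^(-a) := (Real.rpow_pos_of_pos two_pos _).le
  have hq1 : (2:ℝ)^(-a) < 1 := Real.rpow_lt_one_of_one_lt_of_neg one_lt_two (by linarith)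
  refine Summable.of_nonneg_of_le (fun n => (Real.rpow_pos_of_pos two_pos _).le)
    (fun n => ?_) (((summable_geometric_of_lt_one hq0 hq1)).mul_left ((2:ℝ)^(a*N)))
  rw [← aux_qpow n, ← Real.rpow_add two_pos]
  apply Real.rpow_le_rpow_left_iff one_lt_two |>.mpr
  nlinarith [neg_abs_le (N - (n:ℝ)), le_abs_self (N - (n:ℝ))]

lemma key_sum {a : ℝ} (ha0 : 0 < a) (N : ℤ) :
    ∑' n : ℕ, (2:ℝ) ^ (-(a * |(N:ℝ) - (n:ℝ)|)) ≤
      2 * (1 - (2:ℝ)^(-a))⁻¹ * (min ((2:ℝ) ^ ((N:ℝ))) 1) ^ a := by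
  set q : ℝ := (2:ℝ)^(-a) with hq
  have hq0 : 0 < q := Real.rpow_pos_of_pos two_pos _
  have hq1 : q < 1 := Real.rpow_lt_one_of_one_lt_of_neg one_lt_two (by linarith)
  have hinv : 0 < (1 - q)⁻¹ := inv_pos.mpr (by linarith)
  have hsum : Summable (fun n : ℕ => (2:ℝ) ^ (-(a * |(N:ℝ) - (n:ℝ)|))) := aux_summable ha0 _
  rcases le_or_gt N 0 with hN | hN
  · have hNr : (N:ℝ) ≤ 0 := by exact_mod_cast hN
    have hfe : ∀ n : ℕ, (2:ℝ) ^ (-(a * |(N:ℝ) - (n:ℝ)|)) = (2:ℝ)^(a*(N:ℝ)) * q ^ n := by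
      intro n
      rw [← aux_qpow n, ← Real.rpow_add two_pos]
      congr 1
      rw [abs_of_nonpos (by linarith [Nat.cast_nonneg (α := ℝ) n])]
      ring
    rw [tsum_congr hfe, tsum_mul_left, tsum_geometric_of_lt_one hq0.le hq1]
    have hmin : min ((2:ℝ) ^ ((N:ℝ))) 1 = (2:ℝ)^((N:ℝ)) :=
      min_eq_left (Real.rpow_le_one_of_one_le_of_nonpos one_le_two hNr)
    rw [hmin, ← Real.rpow_mul (by norm_num)]
    have : (2:ℝ)^(a*(N:ℝ)) = (2:ℝ)^((N:ℝ)*a) := by ring_nf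
    rw [this]
    nlinarith [Real.rpow_pos_of_pos two_pos ((N:ℝ)*a)]
  · have hmin : min ((2:ℝ) ^ ((N:ℝ))) 1 = 1 :=
      min_eq_right (Real.one_le_rpow one_le_two (by exact_mod_cast hN.le))
    rw [hmin, Real.one_rpow, mul_one]
    set M : ℕ := N.toNat with hM
    have hMr : (M:ℝ) = (N:ℝ) := by
      have := Int.toNat_of_nonneg hN.le
      exact_mod_cast congrArg (Int.cast : ℤ → ℝ) this
    rw [← Summable.sum_add_tsum_nat_add M hsum]
    have htail : ∀ n : ℕ, (2:ℝ) ^ (-(a * |(N:ℝ) - ((n + M : ℕ):ℝ)|)) = q ^ n := by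
      intro n
      rw [← aux_qpow n]
      congr 1
      have : |(N:ℝ) - ((n + M : ℕ):ℝ)| = (n:ℝ) := by
        push_cast
        rw [hMr, abs_of_nonpos (by linarith [Nat.cast_nonneg (α := ℝ) n])]
        ring
      rw [this]
    have h2 : (∑' n : ℕ, (2:ℝ) ^ (-(a * |(N:ℝ) - ((n + M : ℕ):ℝ)|))) = (1 - q)⁻¹ := by
      rw [tsum_congr htail, tsum_geometric_of_lt_one hq0.le hq1]
    have h1 : (∑ i ∈ Finset.range M, (2:ℝ) ^ (-(a * |(N:ℝ) - (i:ℝ)|))) ≤ (1 - q)⁻¹ := by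
      have hfi : ∀ i ∈ Finset.range M, (2:ℝ) ^ (-(a * |(N:ℝ) - (i:ℝ)|)) = q * q ^ (M - 1 - i) := by
        intro i hi
        rw [Finset.mem_range] at hi
        have : q * q ^ (M - 1 - i) = q ^ (M - i) := by
          rw [← pow_succ']
          congr 1
          omega
        rw [this, ← aux_qpow (M - i)]
        congr 1
        have hcast : ((M - i : ℕ):ℝ) = (N:ℝ) - (i:ℝ) := by
          rw [Nat.cast_sub hi.le, hMr]
        rw [hcast, abs_of_nonneg (by rw [← hcast]; positivity)]
      rw [Finset.sum_congr rfl hfi, ← Finset.mul_sum, Finset.sum_range_reflect (fun i => q ^ i) M]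
      calc q * ∑ j ∈ Finset.range M, q ^ j ≤ 1 * (1 - q)⁻¹ := by
            apply mul_le_mul hq1.le ?_ (by positivity) (by norm_num)
            rw [← tsum_geometric_of_lt_one hq0.le hq1]
            exact Summable.sum_le_tsum _ (fun i _ => by positivity) (summable_geometric_of_lt_one hq0.le hq1)
        _ = (1 - q)⁻¹ := one_mul _
    rw [h2]
    linarith

def lowEquiv (k : ℤ) : ℕ ≃ {m : ℤ // m ≤ k} where
  toFun n := ⟨k - n, by omega⟩
  invFun m := (k - m.1).toNat
  left_inv n := by simp
  right_inv m := by
    ext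
    have := m.2
    simp
    omega

/-- Low-frequency weighted summation estimate: for `δ̃ ∈ (0,1/2)` there is a constant
`C = C(δ̃)` such that for every positive sequence `β` that is slowly varying with
parameter `δ̃` and all `k, j ∈ ℤ`,
`Σ_{k' ≤ k} 2^{k'} (1 + 2^{2(k'+j)})⁻¹ β_{k'}
  ≤ C (min(2^k, 2^{−j}))^{1−δ̃} 2^{−δ̃ j} β_{−j}`. -/
theorem low_frequency_sum_estimate (δt : ℝ) (hδt₀ : 0 < δt) (hδt₁ : δt < 1 / 2) :
    ∃ C : ℝ, 0 < C ∧
      ∀ β : ℤ → ℝ, (∀ k, 0 < β k) →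
        (∀ k k' : ℤ, β k ≤ (2 : ℝ) ^ (δt * |(k : ℝ) - (k' : ℝ)|) * β k') →
        ∀ k j : ℤ,
          (∑' k' : {m : ℤ // m ≤ k},
              (2 : ℝ) ^ (k' : ℤ) * (1 + (2 : ℝ) ^ (2 * ((k' : ℤ) + j)))⁻¹ * β k') ≤
            C * (min ((2 : ℝ) ^ k) ((2 : ℝ) ^ (-j))) ^ (1 - δt) *
              (2 : ℝ) ^ (-(δt * (j : ℝ))) * β (-j) := by
  set a : ℝ := 1 - δt with ha
  have ha0 : 0 < a := by rw [ha]; linarith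
  set q : ℝ := (2:ℝ)^(-a) with hq
  have hq0 : 0 < q := Real.rpow_pos_of_pos two_pos _
  have hq1 : q < 1 := Real.rpow_lt_one_of_one_lt_of_neg one_lt_two (by linarith)
  have hinv : 0 < (1 - q)⁻¹ := inv_pos.mpr (by linarith)
  refine ⟨2 * (1 - q)⁻¹, by positivity, ?_⟩
  intro β hβpos hβ k j
  set c : ℝ := (2:ℝ) ^ (-(j:ℝ)) * β (-j) with hc
  have hc0 : 0 ≤ c := mul_nonneg (Real.rpow_nonneg (by norm_num) _) (hβpos _).le
  -- termwise bound
  have hterm : ∀ m : ℤ,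
      (2 : ℝ) ^ m * (1 + (2 : ℝ) ^ (2 * (m + j)))⁻¹ * β m ≤
        c * (2:ℝ) ^ (-(a * |(m:ℝ) + (j:ℝ)|)) := by
    intro m
    set s : ℝ := |(m:ℝ) + (j:ℝ)| with hs
    have hA : (2:ℝ) ^ m * (1 + (2:ℝ) ^ (2 * (m + j)))⁻¹ ≤ (2:ℝ) ^ (-(j:ℝ) - s) := by
      rcases le_or_gt (m + j) 0 with hcc | hcc
      · have hcr : (m:ℝ) + (j:ℝ) ≤ 0 := by exact_mod_cast hcc
        have habs : s = -((m:ℝ) + (j:ℝ)) := abs_of_nonpos hcr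
        have h1 : (1 + (2:ℝ) ^ (2 * (m + j)))⁻¹ ≤ 1 := by
          rw [inv_le_one_iff₀]
          right
          have : (0:ℝ) < (2:ℝ) ^ (2 * (m + j)) := by positivity
          linarith
        calc (2:ℝ) ^ m * (1 + (2:ℝ) ^ (2 * (m + j)))⁻¹ ≤ (2:ℝ) ^ m * 1 := by
              apply mul_le_mul_of_nonneg_left h1 (by positivity)
          _ = (2:ℝ) ^ (-(j:ℝ) - s) := by
              rw [mul_one, ← Real.rpow_intCast 2 m]
              congr 1
              rw [habs]; ring
      · have hcr : (0:ℝ) < (m:ℝ) + (j:ℝ) := by exact_mod_cast hcc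
        have habs : s = (m:ℝ) + (j:ℝ) := abs_of_pos hcr
        have h1 : (1 + (2:ℝ) ^ (2 * (m + j)))⁻¹ ≤ (2:ℝ) ^ (-(2 * (m + j))) := by
          rw [zpow_neg]
          apply inv_anti₀ (by positivity)
          have : (0:ℝ) < 1 := one_pos
          linarith
        calc (2:ℝ) ^ m * (1 + (2:ℝ) ^ (2 * (m + j)))⁻¹ ≤ (2:ℝ) ^ m * (2:ℝ) ^ (-(2 * (m + j))) := by
              apply mul_le_mul_of_nonneg_left h1 (by positivity)
          _ = (2:ℝ) ^ (m + -(2 * (m + j))) := (zpow_add₀ two_ne_zero _ _).symm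
          _ = (2:ℝ) ^ (-(j:ℝ) - s) := by
              rw [← Real.rpow_intCast 2 (m + -(2 * (m + j)))]
              congr 1
              rw [habs]; push_cast; ring
    have hb : β m ≤ (2:ℝ) ^ (δt * s) * β (-j) := by
      have h := hβ m (-j)
      have : |(m:ℝ) - ((-j:ℤ):ℝ)| = s := by push_cast; rw [hs]; ring_nf
      rwa [this] at h
    calc (2:ℝ) ^ m * (1 + (2:ℝ) ^ (2 * (m + j)))⁻¹ * β m
        ≤ (2:ℝ) ^ (-(j:ℝ) - s) * ((2:ℝ) ^ (δt * s) * β (-j)) := by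
          apply mul_le_mul hA hb (hβpos m).le (by positivity)
      _ = c * (2:ℝ) ^ (-(a * s)) := by
          rw [← mul_assoc, ← Real.rpow_add two_pos]
          have he : (-(j:ℝ) - s) + δt * s = (-(j:ℝ)) + (-(a * s)) := by rw [ha]; ring
          rw [he, Real.rpow_add two_pos, hc]
          ring
  set e := lowEquiv k with he
  set F : {m : ℤ // m ≤ k} → ℝ := fun m => c * (2:ℝ) ^ (-(a * |((m:ℤ):ℝ) + (j:ℝ)|)) with hF
  have hcomp : ∀ n : ℕ, F (e n) = c * (2:ℝ) ^ (-(a * |(((k + j : ℤ)):ℝ) - (n:ℝ)|)) := by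
    intro n
    simp only [hF, he, lowEquiv, Equiv.coe_fn_mk]
    congr 3
    push_cast
    ring_nf
  have hFe : (F ∘ e) = fun n : ℕ => c * (2:ℝ) ^ (-(a * |(((k + j : ℤ)):ℝ) - (n:ℝ)|)) :=
    funext hcomp
  have hFe_summ : Summable (F ∘ e) := by
    rw [hFe]
    exact (aux_summable ha0 (((k + j : ℤ)):ℝ)).mul_left c
  have hFsumm : Summable F := e.summable_iff.mp hFe_summ
  have horig_summ : Summable (fun m : {m : ℤ // m ≤ k} =>
      (2 : ℝ) ^ (m : ℤ) * (1 + (2 : ℝ) ^ (2 * ((m : ℤ) + j)))⁻¹ * β m) := by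
    refine Summable.of_nonneg_of_le (fun m => ?_) (fun m => hterm m.1) hFsumm
    have := hβpos m.1
    positivity
  have h1 : (∑' m : {m : ℤ // m ≤ k},
      (2 : ℝ) ^ (m : ℤ) * (1 + (2 : ℝ) ^ (2 * ((m : ℤ) + j)))⁻¹ * β m) ≤ ∑' m, F m :=
    Summable.tsum_le_tsum (fun m => hterm m.1) horig_summ hFsumm
  have h2 : ∑' m, F m = c * ∑' n : ℕ, (2:ℝ) ^ (-(a * |(((k + j : ℤ)):ℝ) - (n:ℝ)|)) := by
    rw [← e.tsum_eq F, tsum_congr hcomp, tsum_mul_left]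
  have h3 := key_sum ha0 (k + j)
  have h4 : (∑' m : {m : ℤ // m ≤ k},
      (2 : ℝ) ^ (m : ℤ) * (1 + (2 : ℝ) ^ (2 * ((m : ℤ) + j)))⁻¹ * β m) ≤
      c * (2 * (1 - q)⁻¹ * (min ((2:ℝ) ^ (((k + j : ℤ)):ℝ)) 1) ^ a) := by
    refine h1.trans ?_
    rw [h2]
    exact mul_le_mul_of_nonneg_left h3 hc0
  refine h4.trans (le_of_eq ?_)
  -- final algebraic identity
  have hkey : (2:ℝ) ^ (-(j:ℝ)) * (min ((2:ℝ) ^ (((k + j : ℤ)):ℝ)) 1) ^ a =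
      (min ((2 : ℝ) ^ k) ((2 : ℝ) ^ (-j))) ^ a * (2 : ℝ) ^ (-(δt * (j : ℝ))) := by
    rcases le_total k (-j) with h | h
    · have hm1 : min ((2 : ℝ) ^ k) ((2 : ℝ) ^ (-j)) = (2:ℝ) ^ k :=
        min_eq_left (zpow_le_zpow_right₀ one_le_two h)
      have hm2 : min ((2:ℝ) ^ (((k + j : ℤ)):ℝ)) 1 = (2:ℝ) ^ (((k + j : ℤ)):ℝ) := by
        apply min_eq_left
        apply Real.rpow_le_one_of_one_le_of_nonpos one_le_two
        have : (k + j : ℤ) ≤ 0 := by omega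
        exact_mod_cast this
      rw [hm1, hm2, ← Real.rpow_intCast 2 k, ← Real.rpow_mul (by norm_num),
        ← Real.rpow_mul (by norm_num), ← Real.rpow_add two_pos, ← Real.rpow_add two_pos]
      congr 1
      push_cast
      rw [ha]
      ring
    · have hm1 : min ((2 : ℝ) ^ k) ((2 : ℝ) ^ (-j)) = (2:ℝ) ^ (-j) :=
        min_eq_right (zpow_le_zpow_right₀ one_le_two (by omega))
      have hm2 : min ((2:ℝ) ^ (((k + j : ℤ)):ℝ)) 1 = 1 := by
        apply min_eq_right
        apply Real.one_le_rpow one_le_two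
        have : (0:ℤ) ≤ k + j := by omega
        exact_mod_cast this
      rw [hm1, hm2, Real.one_rpow, mul_one, ← Real.rpow_intCast 2 (-j),
        ← Real.rpow_mul (by norm_num), ← Real.rpow_add two_pos]
      congr 1
      push_cast
      rw [ha]
      ring
  rw [hc, ← mul_assoc, mul_comm ((2:ℝ) ^ (-(j:ℝ))) (β (-j)), mul_assoc, mul_assoc]
  rw [show (2:ℝ) ^ (-(j:ℝ)) * (2 * (1 - q)⁻¹ * (min ((2:ℝ) ^ (((k + j : ℤ)):ℝ)) 1) ^ a)
      = 2 * (1 - q)⁻¹ * ((2:ℝ) ^ (-(j:ℝ)) * (min ((2:ℝ) ^ (((k + j : ℤ)):ℝ)) 1) ^ a) by ring]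
  rw [hkey]
  ring
end
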